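/- arXiv:1901.03382 — 5 statements merged into one kernel-verified Lean document; each statement's English description precedes it below -/
import Mathlib

section
/- For 0 < x < 1, the limit as s → 1⁻ (along real s < 1) of the series ∑_{n=1}^∞ sin(2nπx)/n^{1-s} equals (1/2)·cot(πx). -/
open Filter Real Topology

lemma abel_bound (b w : ℕ → ℝ) (M : ℝ)
    (hb : ∀ k : ℕ, |∑ i ∈ Finset.range k, b i| ≤ M)
    (hanti : ∀ i, w (i + 1) ≤ w i) (hpos : ∀ i, 0 ≤ w i) :
    ∀ N, |∑ i ∈ Finset.range N, w i * b i| ≤ M * w 0 := by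
  have hM : 0 ≤ M := le_trans (abs_nonneg _) (hb 0)
  intro N
  cases N with
  | zero => simpa using mul_nonneg hM (hpos 0)
  | succ n =>
    have key := Finset.sum_range_by_parts w b (n + 1)
    simp only [smul_eq_mul, Nat.add_sub_cancel] at key
    rw [key]
    have h1 : |w n * ∑ i ∈ Finset.range (n + 1), b i| ≤ w n * M := by
      rw [abs_mul, abs_of_nonneg (hpos n)]
      exact mul_le_mul_of_nonneg_left (hb _) (hpos n)
    have h2 : |∑ i ∈ Finset.range n, (w (i + 1) - w i) * ∑ j ∈ Finset.range (i + 1), b j|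
        ≤ ∑ i ∈ Finset.range n, (w i - w (i + 1)) * M := by
      refine (Finset.abs_sum_le_sum_abs _ _).trans (Finset.sum_le_sum fun i _ => ?_)
      rw [abs_mul, abs_sub_comm, abs_of_nonneg (sub_nonneg.2 (hanti i))]
      exact mul_le_mul_of_nonneg_left (hb _) (sub_nonneg.2 (hanti i))
    have h3 : ∑ i ∈ Finset.range n, (w i - w (i + 1)) * M = (w 0 - w n) * M := by
      rw [← Finset.sum_mul, Finset.sum_range_sub' w n]
    have h4 := abs_sub (w n * ∑ i ∈ Finset.range (n + 1), b i)
      (∑ i ∈ Finset.range n, (w (i + 1) - w i) * ∑ j ∈ Finset.range (i + 1), b j)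
    rw [h3] at h2
    linarith
lemma sum_sin_half (y : ℝ) (h : Real.sin y ≠ 0) (k : ℕ) :
    ∑ i ∈ Finset.range k, Real.sin (((i : ℝ) + 1) * (2 * y))
      = (Real.cos y - Real.cos ((2 * (k : ℝ) + 1) * y)) / (2 * Real.sin y) := by
  induction k with
  | zero => simp
  | succ n ih =>
    rw [Finset.sum_range_succ, ih]
    have key : Real.cos ((2 * (n : ℝ) + 1) * y) - Real.cos ((2 * ((n : ℝ) + 1) + 1) * y)
        = 2 * Real.sin y * Real.sin (((n : ℝ) + 1) * (2 * y)) := by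
      rw [Real.cos_sub_cos,
        show ((2 * (n : ℝ) + 1) * y + (2 * ((n : ℝ) + 1) + 1) * y) / 2
          = ((n : ℝ) + 1) * (2 * y) by ring,
        show ((2 * (n : ℝ) + 1) * y - (2 * ((n : ℝ) + 1) + 1) * y) / 2 = -y by ring,
        Real.sin_neg]
      ring
    push_cast
    field_simp
    rw [show 2 * y * ((n:ℝ) + 1) = ((n:ℝ) + 1) * (2 * y) by ring,
      show y * (2 * ((n:ℝ) + 1) + 1) = (2 * ((n:ℝ) + 1) + 1) * y by ring]
    linarith [key]

lemma sum_cos_half (y : ℝ) (h : Real.sin y ≠ 0) (k : ℕ) :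
    ∑ i ∈ Finset.range k, Real.cos ((2 * (i : ℝ) + 3) * y)
      = (Real.sin (((k : ℝ) + 1) * (2 * y)) - Real.sin (2 * y)) / (2 * Real.sin y) := by
  induction k with
  | zero => simp [show (1 : ℝ) * (2 * y) = 2 * y by ring]
  | succ n ih =>
    rw [Finset.sum_range_succ, ih]
    have key : Real.sin (((n : ℝ) + 1 + 1) * (2 * y)) - Real.sin (((n : ℝ) + 1) * (2 * y))
        = 2 * Real.sin y * Real.cos ((2 * (n : ℝ) + 3) * y) := by
      rw [Real.sin_sub_sin,
        show (((n : ℝ) + 1 + 1) * (2 * y) - ((n : ℝ) + 1) * (2 * y)) / 2 = y by ring,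
        show (((n : ℝ) + 1 + 1) * (2 * y) + ((n : ℝ) + 1) * (2 * y)) / 2
          = (2 * (n : ℝ) + 3) * y by ring]
    push_cast
    field_simp
    rw [show ((n:ℝ) + 1) * 2 * y = ((n:ℝ) + 1) * (2 * y) by ring,
      show y * ((n:ℝ) * 2 + 3) = (2 * (n:ℝ) + 3) * y by ring,
      show 2 * y * ((n:ℝ) + 1 + 1) = ((n:ℝ) + 1 + 1) * (2 * y) by ring]
    linarith [key]

lemma rpow_diff_antitone {σ : ℝ} (hσ : 0 < σ) :
    AntitoneOn (fun t : ℝ => t ^ (-σ) - (t + 1) ^ (-σ)) (Set.Ici (1 : ℝ)) := by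
  have hderiv : ∀ t : ℝ, 0 < t →
      HasDerivAt (fun t : ℝ => t ^ (-σ) - (t + 1) ^ (-σ))
        (-σ * t ^ (-σ - 1) - -σ * (t + 1) ^ (-σ - 1)) t := by
    intro t ht
    have h1 : HasDerivAt (fun t : ℝ => t ^ (-σ)) (-σ * t ^ (-σ - 1)) t :=
      Real.hasDerivAt_rpow_const (Or.inl ht.ne')
    have h2 : HasDerivAt (fun t : ℝ => (t + 1) ^ (-σ)) (-σ * (t + 1) ^ (-σ - 1)) t := by
      have := (Real.hasDerivAt_rpow_const (x := t + 1) (p := -σ)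
        (Or.inl (by positivity))).comp t ((hasDerivAt_id t).add_const 1)
      simpa [Function.comp_def] using this
    exact h1.sub h2
  refine antitoneOn_of_deriv_nonpos (convex_Ici 1) ?_ ?_ ?_
  · intro t ht
    exact ((hderiv t (lt_of_lt_of_le one_pos ht)).continuousAt).continuousWithinAt
  · intro t ht
    rw [interior_Ici] at ht
    exact ((hderiv t (lt_trans one_pos ht)).differentiableAt).differentiableWithinAt
  · intro t ht
    rw [interior_Ici] at ht
    have h0 : (0 : ℝ) < t := lt_trans one_pos ht
    rw [(hderiv t h0).deriv]
    have : (t + 1) ^ (-σ - 1) ≤ t ^ (-σ - 1) :=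
      Real.rpow_le_rpow_of_nonpos h0 (by linarith) (by linarith)
    nlinarith

lemma w_antitone {σ : ℝ} (hσ : 0 < σ) (i : ℕ) :
    ((i : ℝ) + 1 + 1) ^ (-σ) - ((i : ℝ) + 1 + 1 + 1) ^ (-σ)
      ≤ ((i : ℝ) + 1) ^ (-σ) - ((i : ℝ) + 1 + 1) ^ (-σ) := by
  have h := rpow_diff_antitone hσ (a := (i : ℝ) + 1) (b := (i : ℝ) + 2)
    (Set.mem_Ici.mpr (by linarith [Nat.cast_nonneg (α := ℝ) i]))
    (Set.mem_Ici.mpr (by linarith [Nat.cast_nonneg (α := ℝ) i])) (by linarith)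
  simp only [show ((i : ℝ) + 1 + 1) = (i : ℝ) + 2 by ring,
    show ((i : ℝ) + 2 + 1) = (i : ℝ) + 3 by ring] at *
  convert h using 3 <;> ring

open Set in
lemma key_bound (x : ℝ) (hx0 : 0 < x) (hx1 : x < 1) (F : ℝ → ℝ)
    (hF : ∀ s : ℝ, s < 1 →
      Tendsto (fun N : ℕ => ∑ n ∈ Finset.range N,
        Real.sin (2 * π * (n + 1) * x) / ((n : ℝ) + 1) ^ (1 - s)) atTop (𝓝 (F s)))
    (s : ℝ) (hs : s < 1) :
    |F s - (1 / 2) * Real.cot (π * x)| ≤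
      (1 / Real.sin (π * x)) ^ 2 * (1 - (2 : ℝ) ^ (-(1 - s))) := by
  set σ : ℝ := 1 - s with hσdef
  have hσ : 0 < σ := by simp [hσdef]; linarith
  set y : ℝ := π * x with hydef
  have hsy : 0 < Real.sin y := Real.sin_pos_of_pos_of_lt_pi (by positivity)
    (by rw [hydef]; nlinarith [Real.pi_pos])
  set c : ℝ := 1 / (2 * Real.sin y) with hcdef
  have hc : 0 < c := by positivity
  set A : ℝ := c * Real.cos y with hAdef
  have hA : A = (1 / 2) * Real.cot (π * x) := by
    rw [hAdef, hcdef, Real.cot_eq_cos_div_sin]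
    field_simp
    rw [← hydef, mul_div_cancel_left₀ _ hsy.ne']
  set v : ℕ → ℝ := fun i => ((i : ℝ) + 1) ^ (-σ) with hvdef
  set f : ℕ → ℝ := fun n => Real.sin (((n : ℝ) + 1) * (2 * y)) with hfdef
  set w : ℕ → ℝ := fun i => v i - v (i + 1) with hwdef
  set b : ℕ → ℝ := fun i => Real.cos ((2 * (i : ℝ) + 3) * y) with hbdef
  set P : ℕ → ℝ := fun k => ∑ i ∈ Finset.range k, f i with hPdef
  -- rewrite the partial sums
  have hGf : ∀ N : ℕ, (∑ n ∈ Finset.range N,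
      Real.sin (2 * π * (n + 1) * x) / ((n : ℝ) + 1) ^ (1 - s))
      = ∑ n ∈ Finset.range N, v n * f n := by
    intro N
    refine Finset.sum_congr rfl fun n _ => ?_
    have h1 : 2 * π * ((n : ℝ) + 1) * x = ((n : ℝ) + 1) * (2 * y) := by rw [hydef]; ring
    have h2 : ((n : ℝ) + 1) ^ (1 - s) ≠ 0 := by
      positivity
    rw [h1, hfdef, hvdef]
    rw [div_eq_iff h2]
    have : (((n : ℝ) + 1) ^ (-σ)) * (((n : ℝ) + 1) ^ (1 - s)) = 1 := by
      rw [← Real.rpow_add (by positivity), hσdef]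
      norm_num
    calc Real.sin (((n:ℝ)+1) * (2*y))
        = Real.sin (((n:ℝ)+1) * (2*y)) * ((((n : ℝ) + 1) ^ (-σ)) * (((n : ℝ) + 1) ^ (1 - s))) := by
          rw [this]; ring
      _ = ((n : ℝ) + 1) ^ (-σ) * Real.sin (((n:ℝ)+1) * (2*y)) * ((n : ℝ) + 1) ^ (1 - s) := by ring
  have hG : Tendsto (fun N => ∑ n ∈ Finset.range N, v n * f n) atTop (𝓝 (F s)) := by
    have := hF s hs
    simpa only [hGf] using this
  -- closed form for P
  have hPb : ∀ i : ℕ, P (i + 1) = A - c * b i := by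
    intro i
    rw [hPdef]
    simp only [hfdef]
    rw [sum_sin_half y hsy.ne' (i + 1)]
    rw [hAdef, hbdef, hcdef]
    push_cast
    rw [show (2 * ((i : ℝ) + 1) + 1) = 2 * (i : ℝ) + 3 by ring]
    field_simp
  -- bound on partial sums of b
  have hb : ∀ k : ℕ, |∑ i ∈ Finset.range k, b i| ≤ 2 * c := by
    intro k
    simp only [hbdef]
    rw [sum_cos_half y hsy.ne' k]
    rw [abs_div, abs_of_pos (by positivity : (0:ℝ) < 2 * Real.sin y)]
    rw [div_le_iff₀ (by positivity)]
    have h1 := abs_sub (Real.sin (((k : ℝ) + 1) * (2 * y))) (Real.sin (2 * y))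
    have h2 := Real.abs_sin_le_one (((k : ℝ) + 1) * (2 * y))
    have h3 := Real.abs_sin_le_one (2 * y)
    rw [hcdef]
    field_simp
    rw [show ((k:ℝ) + 1) * 2 * y = ((k:ℝ) + 1) * (2 * y) by ring]
    linarith
  -- properties of v and w
  have hv_pos : ∀ i, 0 < v i := fun i => by
    rw [hvdef]; positivity
  have hv_anti : ∀ i, v (i + 1) ≤ v i := by
    intro i
    rw [hvdef]
    exact Real.rpow_le_rpow_of_nonpos (by positivity) (by push_cast; linarith) (by linarith)
  have hw_pos : ∀ i, 0 ≤ w i := fun i => sub_nonneg.2 (hv_anti i)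
  have hw_anti : ∀ i, w (i + 1) ≤ w i := by
    intro i
    simp only [hwdef, hvdef]
    push_cast
    exact w_antitone hσ i
  have hv0 : v 0 = 1 := by rw [hvdef]; norm_num
  have hw0 : w 0 = 1 - (2 : ℝ) ^ (-σ) := by
    rw [hwdef]; simp only [hv0]
    rw [hvdef]; norm_num
  -- Abel summation identity and estimate for each n
  have hEst : ∀ n : ℕ, |(∑ i ∈ Finset.range (n + 1), v i * f i) - A|
      ≤ v n * c + (2 * c) * c * (1 - (2 : ℝ) ^ (-σ)) := by
    intro n
    have key := Finset.sum_range_by_parts v f (n + 1)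
    simp only [smul_eq_mul, Nat.add_sub_cancel] at key
    have hsum_w : ∑ i ∈ Finset.range n, w i = 1 - v n := by
      rw [hwdef]
      rw [Finset.sum_range_sub' v n, hv0]
    have hstep : ∀ i : ℕ, (v (i + 1) - v i) * P (i + 1) = -(w i * (A - c * b i)) := by
      intro i
      rw [hPb i, hwdef]
      ring
    have key2 : (∑ i ∈ Finset.range (n + 1), v i * f i)
        = v n * P (n + 1) + (A * (1 - v n) - c * ∑ i ∈ Finset.range n, w i * b i) := by
      rw [key]
      have : ∑ i ∈ Finset.range n, (v (i + 1) - v i) * (∑ j ∈ Finset.range (i + 1), f j)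
          = ∑ i ∈ Finset.range n, -(w i * (A - c * b i)) := by
        refine Finset.sum_congr rfl fun i _ => ?_
        rw [← hstep i, hPdef]
      rw [this]
      have e2 : ∑ i ∈ Finset.range n, -(w i * (A - c * b i))
          = -A * (∑ i ∈ Finset.range n, w i) + c * ∑ i ∈ Finset.range n, w i * b i := by
        rw [Finset.mul_sum, Finset.mul_sum, ← Finset.sum_add_distrib]
        exact Finset.sum_congr rfl fun i _ => by ring
      rw [e2, hsum_w, hPdef]
      ring
    rw [key2, hPb n]
    have e1 : v n * (A - c * b n) + (A * (1 - v n) - c * ∑ i ∈ Finset.range n, w i * b i) - A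
        = v n * (-(c * b n)) + (- c) * ∑ i ∈ Finset.range n, w i * b i := by ring
    rw [e1]
    have h1 : |v n * (-(c * b n))| ≤ v n * c := by
      rw [abs_mul, abs_of_pos (hv_pos n), abs_neg, abs_mul, abs_of_pos hc]
      have := Real.abs_cos_le_one ((2 * (n : ℝ) + 3) * y)
      have hbn : |b n| ≤ 1 := by rw [hbdef]; exact this
      exact mul_le_mul_of_nonneg_left (mul_le_of_le_one_right hc.le hbn) (hv_pos n).le
    have h2 : |(- c) * ∑ i ∈ Finset.range n, w i * b i| ≤ c * ((2 * c) * (1 - (2:ℝ) ^ (-σ))) := by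
      rw [abs_mul, abs_neg, abs_of_pos hc]
      have := abel_bound b w (2 * c) hb hw_anti hw_pos n
      rw [hw0] at this
      nlinarith
    have h3 := abs_add_le (v n * (-(c * b n))) ((- c) * ∑ i ∈ Finset.range n, w i * b i)
    calc |v n * (-(c * b n)) + (- c) * ∑ i ∈ Finset.range n, w i * b i|
        ≤ |v n * (-(c * b n))| + |(- c) * ∑ i ∈ Finset.range n, w i * b i| := h3
      _ ≤ v n * c + (2 * c) * c * (1 - (2:ℝ) ^ (-σ)) := by nlinarith
  -- take the limit
  have hv_lim : Tendsto v atTop (𝓝 0) := by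
    rw [hvdef]
    have h1 : Tendsto (fun i : ℕ => ((i : ℝ) + 1)) atTop atTop :=
      tendsto_atTop_add_const_right _ 1 tendsto_natCast_atTop_atTop
    exact (tendsto_rpow_neg_atTop hσ).comp h1
  have hlim1 : Tendsto (fun n : ℕ => |(∑ i ∈ Finset.range (n + 1), v i * f i) - A|) atTop
      (𝓝 |F s - A|) := by
    have := (hG.comp (tendsto_add_atTop_nat 1)).sub_const A
    exact this.abs
  have hlim2 : Tendsto (fun n : ℕ => v n * c + (2 * c) * c * (1 - (2 : ℝ) ^ (-σ))) atTop
      (𝓝 (0 * c + (2 * c) * c * (1 - (2 : ℝ) ^ (-σ)))) :=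
    (hv_lim.mul_const c).add_const _
  have hfinal : |F s - A| ≤ 0 * c + (2 * c) * c * (1 - (2 : ℝ) ^ (-σ)) :=
    le_of_tendsto_of_tendsto' hlim1 hlim2 hEst
  rw [← hA]
  have h2σ : (2 : ℝ) ^ (-σ) ≤ 1 :=
    Real.rpow_le_one_of_one_le_of_nonpos (by norm_num) (by linarith)
  have hcsy : c = 1 / (2 * Real.sin y) := hcdef
  have : (2 * c) * c = 1 / 2 * (1 / Real.sin y) ^ 2 := by
    rw [hcsy]; field_simp
  nlinarith [sq_nonneg (1 / Real.sin y), hfinal]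

/-- For `0 < x < 1`, the limit as `s → 1⁻` (along real `s < 1`) of the series
`∑_{n=1}^∞ sin(2nπx)/n^{1-s}` equals `(1/2) · cot(πx)`. -/
theorem stmt0 (x : ℝ) (hx0 : 0 < x) (hx1 : x < 1) (F : ℝ → ℝ)
    (hF : ∀ s : ℝ, s < 1 →
      Tendsto (fun N : ℕ => ∑ n ∈ Finset.range N,
        Real.sin (2 * π * (n + 1) * x) / ((n : ℝ) + 1) ^ (1 - s)) atTop (𝓝 (F s))) :
    Tendsto F (𝓝[<] 1) (𝓝 ((1 / 2) * Real.cot (π * x))) := by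
  set A : ℝ := (1 / 2) * Real.cot (π * x) with hA
  set K : ℝ := (1 / Real.sin (π * x)) ^ 2 with hK
  rw [tendsto_iff_dist_tendsto_zero]
  simp only [Real.dist_eq]
  have hbound : ∀ᶠ s in 𝓝[<] (1 : ℝ), |F s - A| ≤ K * (1 - (2 : ℝ) ^ (-(1 - s))) :=
    eventually_mem_nhdsWithin.mono fun s hs => key_bound x hx0 hx1 F hF s hs
  have hcont : Tendsto (fun s : ℝ => K * (1 - (2 : ℝ) ^ (-(1 - s)))) (𝓝[<] (1 : ℝ)) (𝓝 0) := by
    have h1 : Continuous fun s : ℝ => K * (1 - (2 : ℝ) ^ (-(1 - s))) := by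
      have : ∀ s : ℝ, (2 : ℝ) ^ (-(1 - s)) = Real.exp (Real.log 2 * (-(1 - s))) := fun s =>
        Real.rpow_def_of_pos (by norm_num) _
      simp only [this]
      fun_prop
    have h2 : Tendsto (fun s : ℝ => K * (1 - (2 : ℝ) ^ (-(1 - s)))) (𝓝[<] (1 : ℝ))
        (𝓝 (K * (1 - (2 : ℝ) ^ (-(1 - (1:ℝ)))))) :=
      (h1.tendsto 1).mono_left nhdsWithin_le_nhds
    simpa using h2
  exact squeeze_zero' (Eventually.of_forall fun s => abs_nonneg _) hbound hcont
end

section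
/- For 0 < x < 1, the limit as s → 1⁻ of ∑_{n=1}^∞ cos(2nπx)/n^{1-s} equals −1/2. -/
open Filter Real Topology Finset


-- midpoint inequality for t^{-σ} via AM-GM
lemma aux_delta (σ : ℝ) (hσ : 0 ≤ σ) (u : ℝ) (hu : 1 ≤ u) :
    2 * (u+1) ^ (-σ) ≤ u ^ (-σ) + (u+2) ^ (-σ) := by
  have h0 : (0:ℝ) < u := by linarith
  have h2 : (0:ℝ) < u + 2 := by linarith
  set a := u ^ (-σ) with ha
  set b := (u+2) ^ (-σ) with hb
  set c := (u+1) ^ (-σ) with hc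
  have hap : 0 < a := Real.rpow_pos_of_pos h0 _
  have hbp : 0 < b := Real.rpow_pos_of_pos h2 _
  have hcp : 0 < c := Real.rpow_pos_of_pos (by linarith) _
  have hab : a * b = (u * (u+2)) ^ (-σ) := (Real.mul_rpow h0.le h2.le).symm
  have hcsq : c ^ 2 = ((u+1) * (u+1)) ^ (-σ) := by
    rw [sq, ← Real.mul_rpow (by linarith) (by linarith)]
  have hle : c ^ 2 ≤ a * b := by
    rw [hab, hcsq]
    exact Real.rpow_le_rpow_of_nonpos (by nlinarith) (by nlinarith) (by linarith)
  have h3 : c ≤ Real.sqrt (a * b) := by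
    calc c = Real.sqrt (c ^ 2) := (Real.sqrt_sq hcp.le).symm
    _ ≤ Real.sqrt (a * b) := Real.sqrt_le_sqrt hle
  have h4 : Real.sqrt (a * b) = Real.sqrt a * Real.sqrt b := Real.sqrt_mul hap.le b
  nlinarith [sq_nonneg (Real.sqrt a - Real.sqrt b), Real.sq_sqrt hap.le, Real.sq_sqrt hbp.le]


lemma aux_re_half (z : ℂ) (hza : ‖z‖ = 1) (hz1 : z ≠ 1) :
    (z / (z - 1)).re = 1 / 2 := by
  have hd0 : z - 1 ≠ 0 := sub_ne_zero.mpr hz1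
  have hzc : z * (starRingEnd ℂ) z = 1 := by
    rw [Complex.mul_conj]
    norm_cast
    rw [← Complex.sq_norm, hza]; norm_num
  have hc1 : (starRingEnd ℂ) z - 1 ≠ 0 := by
    intro h
    apply hz1
    have : (starRingEnd ℂ) z = 1 := by linear_combination h
    have := congrArg (starRingEnd ℂ) this
    simpa using this
  have key : z / (z - 1) + (starRingEnd ℂ) (z / (z - 1)) = 1 := by
    rw [map_div₀, map_sub, map_one]
    field_simp
    linear_combination hzc
  have h1 := Complex.add_conj (z / (z-1))
  rw [key] at h1
  have h3 : (2 * (z/(z-1)).re : ℝ) = 1 := by exact_mod_cast h1.symm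
  linarith

lemma aux_main (σ : ℝ) (hσ : 0 < σ) (z : ℂ) (hza : ‖z‖ = 1) (hz1 : z ≠ 1)
    (L : ℝ)
    (hL : Tendsto (fun N : ℕ => ∑ n ∈ Finset.range N, ((n:ℝ)+1) ^ (-σ) * (z ^ (n+1)).re)
      atTop (𝓝 L)) :
    |L + 1/2| ≤ 2 / ‖z-1‖ ^ 2 * (1 - (2:ℝ) ^ (-σ)) := by
  have hd0 : z - 1 ≠ 0 := sub_ne_zero.mpr hz1
  have hdpos : 0 < ‖z - 1‖ := norm_pos_iff.mpr hd0
  set M : ℝ := 2 / ‖z-1‖ ^ 2 with hM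
  have hM0 : 0 ≤ M := by positivity
  set B : ℕ → ℝ := fun n => ((n:ℝ)+1) ^ (-σ) with hB
  set r : ℕ → ℝ := fun n => (z ^ (n+1) / (z - 1)).re with hr
  set Δ : ℕ → ℝ := fun n => B n - B (n+1) with hΔ
  have hBpos : ∀ n, 0 < B n := fun n => Real.rpow_pos_of_pos (by positivity) _
  have hB0 : B 0 = 1 := by simp [hB]
  have hB1 : B 1 = (2:ℝ) ^ (-σ) := by norm_num [hB]
  have hΔnn : ∀ n, 0 ≤ Δ n := by
    intro n
    have h := Real.rpow_le_rpow_of_nonpos (x := (n:ℝ)+1) (y := ((n:ℕ)+1:ℝ)+1)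
      (by positivity) (by linarith) (by linarith : -σ ≤ 0)
    simp only [hΔ, hB]
    push_cast
    linarith [h]
  have hΔanti : ∀ n, Δ (n+1) ≤ Δ n := by
    intro n
    have h := aux_delta σ hσ.le ((n:ℝ)+1) (by linarith [Nat.cast_nonneg (α := ℝ) n])
    simp only [hΔ, hB]
    push_cast
    ring_nf
    ring_nf at h
    linarith
  have hBlim : Tendsto B atTop (𝓝 0) := by
    have h1 : Tendsto (fun n : ℕ => ((n:ℝ)+1)) atTop atTop :=
      tendsto_atTop_add_const_right _ 1 tendsto_natCast_atTop_atTop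
    exact (tendsto_rpow_neg_atTop hσ).comp h1
  have hrhalf : (z/(z-1)).re = 1/2 := aux_re_half z hza hz1
  have hrb : ∀ n, |r n| ≤ 1 / ‖z-1‖ := by
    intro n
    simp only [hr]
    calc |(z^(n+1)/(z-1)).re| ≤ ‖z^(n+1)/(z-1)‖ := Complex.abs_re_le_norm _
    _ = 1 / ‖z-1‖ := by rw [norm_div, norm_pow, hza, one_pow]
  have hC : ∀ N : ℕ, ∑ n ∈ range N, (z ^ (n+1)).re = r N - 1/2 := by
    intro N
    have h1 : ∑ n ∈ range N, z ^ (n+1) = z^(N+1)/(z-1) - z/(z-1) := by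
      have h2 : ∑ n ∈ range N, z ^ (n+1) = z * ∑ n ∈ range N, z ^ n := by
        rw [Finset.mul_sum]; exact Finset.sum_congr rfl fun n _ => by ring
      rw [h2, geom_sum_eq hz1]
      have h3 : z * (z ^ N - 1) = z^(N+1) - z := by ring
      rw [← mul_div_assoc, h3, sub_div]
    calc ∑ n ∈ range N, (z^(n+1)).re = (∑ n ∈ range N, z^(n+1)).re := (Complex.re_sum _ _).symm
    _ = (z^(N+1)/(z-1)).re - (z/(z-1)).re := by rw [h1, Complex.sub_re]
    _ = r N - 1/2 := by rw [hrhalf]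
  have hRb : ∀ K : ℕ, |∑ i ∈ range K, r (i+1)| ≤ M := by
    intro K
    have h1 : ∑ i ∈ range K, (z ^ (i+1+1) / (z-1)) = z^2 * (z^K - 1)/(z-1)^2 := by
      have h2 : ∑ i ∈ range K, (z ^ (i+1+1) / (z-1)) = (z^2/(z-1)) * ∑ i ∈ range K, z ^ i := by
        rw [Finset.mul_sum]; exact Finset.sum_congr rfl fun n _ => by ring
      rw [h2, geom_sum_eq hz1, div_mul_div_comm, ← sq]
    have h3 : ∑ i ∈ range K, r (i+1) = (z^2*(z^K - 1)/(z-1)^2).re := by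
      rw [← h1, ← Complex.re_sum]
    rw [h3]
    calc |(z^2*(z^K-1)/(z-1)^2).re| ≤ ‖z^2*(z^K-1)/(z-1)^2‖ := Complex.abs_re_le_norm _
    _ ≤ M := by
      rw [norm_div, norm_mul, norm_pow, norm_pow, hza, one_pow, one_mul, hM]
      have h4 : ‖z^K - 1‖ ≤ 2 := by
        calc ‖z^K - 1‖ = ‖z^K - 1‖ := rfl
        _ ≤ ‖z^K‖ + ‖(1:ℂ)‖ := norm_sub_le _ _
        _ = 2 := by rw [norm_pow, hza, one_pow, norm_one]; norm_num
      gcongr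
  have hparts : ∀ N : ℕ, ∑ n ∈ range N, B n * (z^(n+1)).re
      = B (N-1) * (r N - 1/2) + ∑ i ∈ range (N-1), Δ i * (r (i+1) - 1/2) := by
    intro N
    have h := Finset.sum_range_by_parts B (fun n => (z^(n+1)).re) N
    simp only [smul_eq_mul] at h
    rw [h, hC]
    have h2 : ∀ i, (B (i+1) - B i) * (∑ j ∈ range (i+1), (z^(j+1)).re)
        = -(Δ i * (r (i+1) - 1/2)) := fun i => by rw [hC]; simp only [hΔ]; ring
    rw [Finset.sum_congr rfl (fun i _ => h2 i), Finset.sum_neg_distrib, sub_neg_eq_add]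
  have hfirstlim : Tendsto (fun N => B (N-1) * (r N - 1/2)) atTop (𝓝 0) := by
    have hb : Tendsto (fun N : ℕ => ((1:ℝ)/‖z-1‖ + 1/2) * B (N-1)) atTop (𝓝 0) := by
      have h4 : Tendsto (fun N : ℕ => B (N-1)) atTop (𝓝 0) := hBlim.comp (tendsto_sub_atTop_nat 1)
      simpa using h4.const_mul ((1:ℝ)/‖z-1‖ + 1/2)
    refine squeeze_zero_norm (fun N => ?_) hb
    ·
      have h1 := hrb N
      have h2 : |r N - 1/2| ≤ |r N| + |(1:ℝ)/2| := abs_sub _ _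
      have h3 := hBpos (N-1)
      rw [Real.norm_eq_abs, abs_mul, abs_of_pos h3]
      have : |(1:ℝ)/2| = 1/2 := by norm_num
      nlinarith [abs_nonneg (r N - 1/2)]
  set U : ℕ → ℝ := fun K => ∑ i ∈ range K, Δ i * (r (i+1) - 1/2) with hU
  have hUlim : Tendsto U atTop (𝓝 L) := by
    have h2 := hL.sub hfirstlim
    rw [sub_zero] at h2
    have h1 : Tendsto (fun N => U (N-1)) atTop (𝓝 L) :=
      h2.congr (fun N => by rw [hparts]; simp only [hU]; ring)
    have h3 := h1.comp (tendsto_add_atTop_nat 1)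
    refine h3.congr (fun K => ?_)
    simp
  have hUeq : ∀ K, U K + 1/2 = (∑ i ∈ range K, Δ i * r (i+1)) + B K / 2 := by
    intro K
    have hsum : ∑ i ∈ range K, Δ i = 1 - B K := by
      simp only [hΔ]
      rw [Finset.sum_range_sub' B K, hB0]
    have h5 : U K = (∑ i ∈ range K, Δ i * r (i+1)) - (∑ i ∈ range K, Δ i) * (1/2) := by
      simp only [hU, mul_sub]
      rw [Finset.sum_sub_distrib, ← Finset.sum_mul]
    rw [h5, hsum]; ring
  have hVb : ∀ K, |∑ i ∈ range K, Δ i * r (i+1)| ≤ M * Δ 0 := by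
    intro K
    have h := Finset.sum_range_by_parts Δ (fun i => r (i+1)) K
    simp only [smul_eq_mul] at h
    rw [h]
    calc |Δ (K-1) * (∑ j ∈ range K, r (j+1)) - ∑ i ∈ range (K-1), (Δ (i+1) - Δ i) * (∑ j ∈ range (i+1), r (j+1))|
        ≤ |Δ (K-1) * ∑ j ∈ range K, r (j+1)| + |∑ i ∈ range (K-1), (Δ (i+1) - Δ i) * (∑ j ∈ range (i+1), r (j+1))| := abs_sub _ _
      _ ≤ Δ (K-1) * M + ∑ i ∈ range (K-1), (Δ i - Δ (i+1)) * M := by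
          apply add_le_add
          · rw [abs_mul, abs_of_nonneg (hΔnn _)]
            exact mul_le_mul_of_nonneg_left (hRb K) (hΔnn _)
          · refine (Finset.abs_sum_le_sum_abs _ _).trans (Finset.sum_le_sum fun i _ => ?_)
            rw [abs_mul, abs_of_nonpos (by linarith [hΔanti i] : Δ (i+1) - Δ i ≤ 0), neg_sub]
            exact mul_le_mul_of_nonneg_left (hRb (i+1)) (by linarith [hΔanti i])
      _ ≤ M * Δ 0 := by
          rw [← Finset.sum_mul, Finset.sum_range_sub' Δ (K-1)]
          have := hΔnn (K-1)
          nlinarith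
  have h1 : Tendsto (fun K => |U K + 1/2|) atTop (𝓝 |L + 1/2|) :=
    (hUlim.add tendsto_const_nhds).abs
  have h2 : Tendsto (fun K => M * Δ 0 + B K / 2) atTop (𝓝 (M * Δ 0)) := by
    have h5 : Tendsto (fun K => M * Δ 0 + B K / 2) atTop (𝓝 (M * Δ 0 + 0 / 2)) :=
      (tendsto_const_nhds (x := M * Δ 0)).add (hBlim.div_const 2)
    simpa using h5
  have h3 : |L + 1/2| ≤ M * Δ 0 := by
    refine le_of_tendsto_of_tendsto' h1 h2 (fun K => ?_)
    rw [hUeq]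
    calc |(∑ i ∈ range K, Δ i * r (i+1)) + B K / 2|
        ≤ |∑ i ∈ range K, Δ i * r (i+1)| + |B K / 2| := abs_add_le _ _
      _ ≤ M * Δ 0 + B K / 2 := add_le_add (hVb K) (le_of_eq (abs_of_pos (by positivity)))
  have hΔ0val : Δ 0 = 1 - (2:ℝ)^(-σ) := by simp only [hΔ]; rw [hB0, hB1]
  rw [hΔ0val] at h3
  exact h3


/-- For `0 < x < 1`, the limit as `s → 1⁻` of `∑_{n=1}^∞ cos(2nπx)/n^{1-s}` equals `-1/2`. -/
theorem stmt1 (x : ℝ) (hx0 : 0 < x) (hx1 : x < 1) (F : ℝ → ℝ)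
    (hF : ∀ s : ℝ, s < 1 →
      Tendsto (fun N : ℕ => ∑ n ∈ Finset.range N,
        Real.cos (2 * π * (n + 1) * x) / ((n : ℝ) + 1) ^ (1 - s)) atTop (𝓝 (F s))) :
    Tendsto F (𝓝[<] 1) (𝓝 (-(1 / 2))) := by
  have hπ := Real.pi_pos
  set z : ℂ := Complex.exp ((2*π*x : ℝ) * Complex.I) with hz
  have hza : ‖z‖ = 1 := Complex.norm_exp_ofReal_mul_I _
  have hz1 : z ≠ 1 := by
    rw [hz, Ne, Complex.exp_eq_one_iff]
    push_neg
    intro n h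
    have h3 : ((2*π*x :ℝ) : ℂ) = (n:ℂ) * (2*(π:ℂ)) := by
      have h4 : (((2*π*x :ℝ) : ℂ) - (n:ℂ) * (2*(π:ℂ))) * Complex.I = 0 := by
        push_cast at h ⊢
        linear_combination h
      rcases mul_eq_zero.mp h4 with h5 | h5
      · linear_combination h5
      · exact absurd h5 Complex.I_ne_zero
    have h2 : (2*π*x : ℝ) = (n:ℝ) * (2*π) := by exact_mod_cast h3
    have hxn : x = (n:ℝ) := by
      have h2π : (2*π) ≠ 0 := by positivity
      apply mul_left_cancel₀ h2π
      rw [show (2*π)*x = 2*π*x by ring, h2]; ring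
    have hn0 : (0:ℤ) < n := by exact_mod_cast hxn ▸ hx0
    have hn1 : n < (1:ℤ) := by exact_mod_cast hxn ▸ hx1
    omega
  have hcos : ∀ n : ℕ, (z ^ (n+1)).re = Real.cos (2*π*(n+1)*x) := by
    intro n
    rw [hz, ← Complex.exp_nat_mul]
    rw [show ((n+1 : ℕ) : ℂ) * (((2*π*x : ℝ) : ℂ) * Complex.I)
        = ((((n:ℝ)+1) * (2*π*x) : ℝ) : ℂ) * Complex.I by push_cast; ring]
    rw [Complex.exp_ofReal_mul_I_re]
    congr 1
    ring
  have hMain : ∀ s : ℝ, s < 1 →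
      |F s + 1/2| ≤ 2 / ‖z-1‖^2 * (1 - (2:ℝ)^(-(1-s))) := by
    intro s hs
    apply aux_main (1-s) (by linarith) z hza hz1 (F s)
    refine (hF s hs).congr (fun N => Finset.sum_congr rfl fun n _ => ?_)
    rw [hcos n, Real.rpow_neg (by positivity), div_eq_mul_inv]
    ring
  have hbound0 : Tendsto (fun s : ℝ => 2 / ‖z-1‖^2 * (1 - (2:ℝ)^(-(1-s))))
      (𝓝[<] (1:ℝ)) (𝓝 0) := by
    have hc : ContinuousAt (fun s : ℝ => 2 / ‖z-1‖^2 * (1 - (2:ℝ)^(-(1-s)))) 1 := by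
      apply ContinuousAt.mul continuousAt_const
      apply ContinuousAt.sub continuousAt_const
      exact (Real.continuousAt_const_rpow (by norm_num : (2:ℝ) ≠ 0)).comp (by fun_prop)
    have h : Tendsto (fun s : ℝ => 2 / ‖z-1‖^2 * (1 - (2:ℝ)^(-(1-s))))
        (𝓝[<] (1:ℝ)) (𝓝 (2 / ‖z-1‖^2 * (1 - (2:ℝ)^(-(1-(1:ℝ)))))) :=
      hc.tendsto.mono_left nhdsWithin_le_nhds
    norm_num at h
    exact h.congr (fun s => by norm_num)
  have hf0 : Tendsto (fun s => F s + 1/2) (𝓝[<] (1:ℝ)) (𝓝 0) := by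
    apply squeeze_zero_norm' ?_ hbound0
    filter_upwards [self_mem_nhdsWithin] with s hs
    rw [Real.norm_eq_abs]
    exact hMain s hs
  have h9 : Tendsto (fun s => F s + 1/2 + (-(1/2:ℝ))) (𝓝[<] (1:ℝ)) (𝓝 (0 + (-(1/2:ℝ)))) :=
    hf0.add tendsto_const_nhds
  simpa using h9
end

section
/- For 0 < x < 1, the limit as s → 1⁻ of ∑_{n=1}^∞ e^{2πinx}/n^{1-s} equals e^{2πix}/(1 − e^{2πix}) = (1/2)(−1 + i·cot(πx)). -/
open Filter Real Topology Complex

lemma abel_id (c : ℂ) (b : ℕ → ℂ) (N : ℕ) :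
    (1 - c) * ∑ n ∈ Finset.range N, c ^ (n + 1) * b n
      = c * b 0 - c ^ (N + 1) * b N
        + ∑ n ∈ Finset.range N, c ^ (n + 2) * (b (n + 1) - b n) := by
  induction N with
  | zero => simp
  | succ N ih =>
    rw [Finset.sum_range_succ, Finset.sum_range_succ, mul_add, ih]
    ring

lemma key_bound_s2 (c : ℂ) (hc_norm : ‖c‖ = 1) (h1c : (1 : ℂ) - c ≠ 0)
    (t : ℝ) (ht : 0 < t) (L : ℂ)
    (hFs : Tendsto (fun N : ℕ => ∑ n ∈ Finset.range N,
        c ^ (n + 1) * (((((n : ℝ) + 1) ^ (-t) : ℝ)) : ℂ)) atTop (𝓝 L)) :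
    ‖L - c / (1 - c)‖ ≤ 2 * (1 - (2 : ℝ) ^ (-t)) / ‖1 - c‖ ^ 2 := by
  set β : ℕ → ℝ := fun n => ((n : ℝ) + 1) ^ (-t) with hβ
  set δ : ℕ → ℝ := fun n => β (n + 1) - β n with hδ
  have hβpos : ∀ n, 0 < β n := fun n => Real.rpow_pos_of_pos (by positivity) _
  have hβanti : ∀ n, β (n + 1) ≤ β n := by
    intro n
    apply Real.rpow_le_rpow_of_nonpos (by positivity) (by push_cast; linarith)
      (by linarith)
  have hβ0 : β 0 = 1 := by simp [hβ]
  have hβ1 : β 1 = (2 : ℝ) ^ (-t) := by norm_num [hβ]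
  have hδ_nonpos : ∀ n, δ n ≤ 0 := fun n => sub_nonpos.mpr (hβanti n)
  have hconv : ∀ n, 0 ≤ δ (n + 1) - δ n := by
    intro n
    have key : β n + β (n + 2) ≥ 2 * β (n + 1) := by
      set a : ℝ := (n : ℝ) + 1 with ha_def
      have ha : 0 < a := by positivity
      have hm : (0:ℝ) < a + 1 := by linarith
      have hb : (0:ℝ) < a + 2 := by linarith
      have e1 : β n = a ^ (-t) := rfl
      have e2 : β (n + 1) = (a + 1) ^ (-t) := by simp only [hβ, ha_def] <;> push_cast <;> ring_nf
      have e3 : β (n + 2) = (a + 2) ^ (-t) := by simp only [hβ, ha_def] <;> push_cast <;> ring_nf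
      rw [e1, e2, e3]
      have h1 : (a + 1) ^ (-t) ≤ (a * (a + 2)) ^ (-(t/2)) := by
        have hsq : ((a+1)^2) ^ (-(t/2)) = (a + 1) ^ (-t) := by
          rw [← Real.rpow_natCast (a+1) 2, ← Real.rpow_mul hm.le]
          congr 1; push_cast; ring
        rw [← hsq]
        apply Real.rpow_le_rpow_of_nonpos (by positivity) (by nlinarith) (by linarith)
      have h2 : 2 * (a * (a + 2)) ^ (-(t/2)) ≤ a ^ (-t) + (a + 2) ^ (-t) := by
        have hmul : (a * (a + 2)) ^ (-(t/2)) = a ^ (-(t/2)) * (a + 2) ^ (-(t/2)) :=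
          Real.mul_rpow ha.le hb.le
        have ea : a ^ (-t) = a ^ (-(t/2)) * a ^ (-(t/2)) := by
          rw [← Real.rpow_add ha]; ring_nf
        have eb : (a+2) ^ (-t) = (a+2) ^ (-(t/2)) * (a+2) ^ (-(t/2)) := by
          rw [← Real.rpow_add hb]; ring_nf
        rw [hmul, ea, eb]
        nlinarith [sq_nonneg (a ^ (-(t/2)) - (a + 2) ^ (-(t/2)))]
      linarith
    simp only [hδ]
    linarith [key]
  -- limits
  have hβlim : Tendsto (fun N : ℕ => β N) atTop (𝓝 0) := by
    apply (tendsto_rpow_neg_atTop ht).comp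
    exact tendsto_atTop_add_const_right atTop 1 tendsto_natCast_atTop_atTop
  have hδlim : Tendsto (fun N : ℕ => δ N) atTop (𝓝 0) := by
    have := (hβlim.comp (tendsto_add_atTop_nat 1)).sub hβlim
    simpa using this
  have hA : Tendsto (fun N : ℕ => c ^ (N + 1) * ((β N : ℝ) : ℂ)) atTop (𝓝 0) := by
    apply squeeze_zero_norm (a := fun N => β N) _ hβlim
    intro n
    rw [norm_mul, norm_pow, hc_norm, one_pow, one_mul, Complex.norm_real,
      Real.norm_eq_abs, abs_of_pos (hβpos n)]
  have hA' : Tendsto (fun N : ℕ => c ^ (N + 1) * ((δ N : ℝ) : ℂ)) atTop (𝓝 0) := by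
    apply squeeze_zero_norm (a := fun N => β N) _ hβlim
    intro n
    rw [norm_mul, norm_pow, hc_norm, one_pow, one_mul, Complex.norm_real,
      Real.norm_eq_abs, abs_of_nonpos (hδ_nonpos n)]
    simp only [hδ]
    linarith [hβanti n, hβpos (n+1)]
  -- combined identity
  set R : ℕ → ℂ := fun N => ∑ n ∈ Finset.range N,
    c ^ (n + 2) * (((δ (n + 1) : ℝ) : ℂ) - ((δ n : ℝ) : ℂ)) with hR
  have combined : ∀ N : ℕ,
      c * R N = (1 - c) ^ 2 * (∑ n ∈ Finset.range N, c ^ (n + 1) * ((β n : ℝ) : ℂ))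
        - (1 - c) * (c * ((β 0 : ℝ) : ℂ) - c ^ (N + 1) * ((β N : ℝ) : ℂ))
        - c * (c * ((δ 0 : ℝ) : ℂ) - c ^ (N + 1) * ((δ N : ℝ) : ℂ)) := by
    intro N
    have e1 := abel_id c (fun n => ((β n : ℝ) : ℂ)) N
    have e2 := abel_id c (fun n => ((δ n : ℝ) : ℂ)) N
    have hs1 : (∑ n ∈ Finset.range N, c ^ (n + 2) * (((β (n+1) : ℝ) : ℂ) - ((β n : ℝ) : ℂ)))
        = c * ∑ n ∈ Finset.range N, c ^ (n + 1) * ((δ n : ℝ) : ℂ) := by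
      rw [Finset.mul_sum]
      refine Finset.sum_congr rfl fun n _ => ?_
      simp only [hδ, Complex.ofReal_sub]
      ring
    rw [hs1] at e1
    simp only [hR]
    linear_combination (-(1 - c)) * e1 + (-c) * e2
  have hcR : Tendsto (fun N => c * R N) atTop
      (𝓝 ((1 - c) ^ 2 * L - (1 - c) * (c * ((β 0 : ℝ) : ℂ)) - c * (c * ((δ 0 : ℝ) : ℂ)))) := by
    have h1 : Tendsto (fun N : ℕ => (1 - c) ^ 2 * (∑ n ∈ Finset.range N, c ^ (n + 1) * ((β n : ℝ) : ℂ))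
        - (1 - c) * (c * ((β 0 : ℝ) : ℂ) - c ^ (N + 1) * ((β N : ℝ) : ℂ))
        - c * (c * ((δ 0 : ℝ) : ℂ) - c ^ (N + 1) * ((δ N : ℝ) : ℂ))) atTop
        (𝓝 ((1 - c) ^ 2 * L - (1 - c) * (c * ((β 0 : ℝ) : ℂ) - 0) - c * (c * ((δ 0 : ℝ) : ℂ) - 0))) := by
      exact ((hFs.const_mul _).sub ((tendsto_const_nhds.sub hA).const_mul _)).sub
        ((tendsto_const_nhds.sub hA').const_mul _)
    simp only [sub_zero] at h1
    exact h1.congr fun N => (combined N).symm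
  have hRb : ∀ N, ‖c * R N‖ ≤ 1 - (2 : ℝ) ^ (-t) := by
    intro N
    rw [norm_mul, hc_norm, one_mul]
    calc ‖R N‖ ≤ ∑ n ∈ Finset.range N, ‖c ^ (n + 2) * (((δ (n+1) : ℝ) : ℂ) - ((δ n : ℝ) : ℂ))‖ :=
          norm_sum_le _ _
      _ = ∑ n ∈ Finset.range N, (δ (n+1) - δ n) := by
          refine Finset.sum_congr rfl fun n _ => ?_
          rw [norm_mul, norm_pow, hc_norm, one_pow, one_mul, ← Complex.ofReal_sub,
            Complex.norm_real, Real.norm_eq_abs, _root_.abs_of_nonneg (hconv n)]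
      _ = δ N - δ 0 := Finset.sum_range_sub δ N
      _ ≤ 1 - (2 : ℝ) ^ (-t) := by
          have h0 : δ 0 = (2:ℝ) ^ (-t) - 1 := by simp only [hδ]; rw [hβ1, hβ0]
          have := hδ_nonpos N
          linarith
  have hW : ‖(1 - c) ^ 2 * L - (1 - c) * (c * ((β 0 : ℝ) : ℂ)) - c * (c * ((δ 0 : ℝ) : ℂ))‖
      ≤ 1 - (2 : ℝ) ^ (-t) := le_of_tendsto hcR.norm (Eventually.of_forall hRb)
  -- conclusion
  have hδ0norm : ‖c * (c * ((δ 0 : ℝ) : ℂ))‖ = 1 - (2:ℝ) ^ (-t) := by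
    have h0 : δ 0 = (2:ℝ) ^ (-t) - 1 := by simp only [hδ]; rw [hβ1, hβ0]
    rw [norm_mul, norm_mul, hc_norm, one_mul, one_mul, Complex.norm_real, Real.norm_eq_abs,
      h0, abs_of_nonpos]
    · ring
    · have : (2:ℝ) ^ (-t) ≤ 1 := Real.rpow_le_one_of_one_le_of_nonpos (by norm_num) (by linarith)
      linarith
  have hnum : ‖(1 - c) ^ 2 * L - (1 - c) * c‖ ≤ 2 * (1 - (2:ℝ) ^ (-t)) := by
    have hβ0C : ((β 0 : ℝ) : ℂ) = 1 := by rw [hβ0]; norm_num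
    have : (1 - c) ^ 2 * L - (1 - c) * c
        = ((1 - c) ^ 2 * L - (1 - c) * (c * ((β 0 : ℝ) : ℂ)) - c * (c * ((δ 0 : ℝ) : ℂ)))
          + c * (c * ((δ 0 : ℝ) : ℂ)) := by rw [hβ0C]; ring
    rw [this]
    calc _ ≤ ‖(1 - c) ^ 2 * L - (1 - c) * (c * ((β 0 : ℝ) : ℂ)) - c * (c * ((δ 0 : ℝ) : ℂ))‖
          + ‖c * (c * ((δ 0 : ℝ) : ℂ))‖ := norm_add_le _ _
      _ ≤ (1 - (2:ℝ) ^ (-t)) + (1 - (2:ℝ) ^ (-t)) := by rw [hδ0norm]; linarith [hW]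
      _ = 2 * (1 - (2:ℝ) ^ (-t)) := by ring
  have hrw : L - c / (1 - c) = ((1 - c) ^ 2 * L - (1 - c) * c) / (1 - c) ^ 2 := by
    field_simp
  rw [hrw, norm_div, norm_pow]
  have hne : ‖(1:ℂ) - c‖ ≠ 0 := norm_ne_zero_iff.mpr h1c
  gcongr

/-- For `0 < x < 1`, the limit as `s → 1⁻` of `∑_{n=1}^∞ e^{2πinx}/n^{1-s}` equals
`e^{2πix}/(1 - e^{2πix}) = (1/2)(-1 + i·cot(πx))`. -/
theorem stmt2 (x : ℝ) (hx0 : 0 < x) (hx1 : x < 1) (F : ℝ → ℂ)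
    (hF : ∀ s : ℝ, s < 1 →
      Tendsto (fun N : ℕ => ∑ n ∈ Finset.range N,
        Complex.exp (2 * π * Complex.I * (n + 1) * x) / ((n : ℂ) + 1) ^ ((1 : ℂ) - (s : ℂ)))
        atTop (𝓝 (F s))) :
    Tendsto F (𝓝[<] 1)
      (𝓝 (Complex.exp (2 * π * Complex.I * x) / (1 - Complex.exp (2 * π * Complex.I * x)))) ∧
    Complex.exp (2 * π * Complex.I * x) / (1 - Complex.exp (2 * π * Complex.I * x)) =
      (1 / 2) * (-1 + Complex.I * (Real.cot (π * x) : ℂ)) := by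
  have hπ := Real.pi_pos
  set c : ℂ := Complex.exp (2 * π * Complex.I * x) with hc_def
  have hsin : Real.sin (π * x) ≠ 0 :=
    ne_of_gt (Real.sin_pos_of_pos_of_lt_pi (by positivity) (by nlinarith))
  have hc_ne : c ≠ 1 := by
    intro h
    rw [hc_def, Complex.exp_eq_one_iff] at h
    obtain ⟨n, hn⟩ := h
    have h2 : (2 * (π : ℂ) * Complex.I : ℂ) ≠ 0 := by
      simp [Complex.I_ne_zero, Real.pi_ne_zero]
    have hx : (x : ℂ) = (n : ℂ) := by
      apply mul_left_cancel₀ h2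
      rw [show 2 * (π:ℂ) * Complex.I * x = 2 * π * Complex.I * x by ring, hn]; ring
    have hxn : x = (n : ℝ) := by exact_mod_cast hx
    rcases le_or_gt n 0 with h | h
    · have : (n : ℝ) ≤ 0 := by exact_mod_cast h
      linarith
    · have : (1 : ℝ) ≤ (n : ℝ) := by exact_mod_cast h
      linarith
  have h1c : (1 : ℂ) - c ≠ 0 := sub_ne_zero.mpr (fun h => hc_ne h.symm)
  have hc_norm : ‖c‖ = 1 := by
    rw [hc_def, show (2 * (π:ℂ) * Complex.I * x) = ((2 * π * x : ℝ) : ℂ) * Complex.I by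
      push_cast; ring]
    exact Complex.norm_exp_ofReal_mul_I _
  constructor
  · -- limit part
    have key : ∀ s : ℝ, s < 1 →
        ‖F s - c / (1 - c)‖ ≤ 2 * (1 - (2 : ℝ) ^ (-(1 - s))) / ‖1 - c‖ ^ 2 := by
      intro s hs
      have ht : 0 < 1 - s := by linarith
      apply key_bound_s2 c hc_norm h1c (1 - s) ht (F s)
      have hterm : ∀ N : ℕ, (∑ n ∈ Finset.range N,
          Complex.exp (2 * π * Complex.I * (n + 1) * x) / ((n : ℂ) + 1) ^ ((1 : ℂ) - (s : ℂ)))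
          = ∑ n ∈ Finset.range N, c ^ (n + 1) * (((((n : ℝ) + 1) ^ (-(1 - s)) : ℝ)) : ℂ) := by
        intro N
        refine Finset.sum_congr rfl fun n _ => ?_
        have hexp : Complex.exp (2 * π * Complex.I * (n + 1) * x) = c ^ (n + 1) := by
          rw [hc_def, ← Complex.exp_nat_mul]
          congr 1
          push_cast; ring
        have hden : ((n : ℂ) + 1) ^ ((1 : ℂ) - (s : ℂ))
            = (((((n : ℝ) + 1) ^ (1 - s) : ℝ)) : ℂ) := by
          rw [show ((n : ℂ) + 1) = ((((n : ℝ) + 1 : ℝ)) : ℂ) by push_cast; ring,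
            show ((1 : ℂ) - (s : ℂ)) = (((1 - s : ℝ)) : ℂ) by push_cast; ring,
            ← Complex.ofReal_cpow (by positivity)]
        rw [hexp, hden, Real.rpow_neg (by positivity), Complex.ofReal_inv, div_eq_mul_inv]
      exact (hF s hs).congr hterm
    have hbnd : Tendsto (fun s : ℝ => 2 * (1 - (2 : ℝ) ^ (-(1 - s))) / ‖1 - c‖ ^ 2)
        (𝓝[<] 1) (𝓝 0) := by
      have hcont : Continuous fun s : ℝ => (2 : ℝ) ^ (-(1 - s)) := by
        simp only [Real.rpow_def_of_pos (by norm_num : (0:ℝ) < 2)]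
        exact Real.continuous_exp.comp (by continuity)
      have h0 : Tendsto (fun s : ℝ => 2 * (1 - (2 : ℝ) ^ (-(1 - s))) / ‖1 - c‖ ^ 2)
          (𝓝 1) (𝓝 (2 * (1 - (2 : ℝ) ^ (-(1 - (1:ℝ)))) / ‖1 - c‖ ^ 2)) := by
        apply Tendsto.div_const
        exact (tendsto_const_nhds.sub (hcont.tendsto 1)).const_mul 2
      have : 2 * (1 - (2 : ℝ) ^ (-(1 - (1:ℝ)))) / ‖1 - c‖ ^ 2 = 0 := by
        norm_num
      rw [this] at h0
      exact h0.mono_left nhdsWithin_le_nhds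
    rw [tendsto_iff_norm_sub_tendsto_zero]
    apply squeeze_zero' (Eventually.of_forall fun s => norm_nonneg _) _ hbnd
    filter_upwards [self_mem_nhdsWithin] with s hs
    exact key s hs
  · -- identity part
    have hc2 : c = (2 * (Real.cos (π*x) : ℂ) ^ 2 - 1)
        + (2 * (Real.sin (π*x) : ℂ) * (Real.cos (π*x) : ℂ)) * Complex.I := by
      have h : (2 * (π:ℂ) * Complex.I * x) = ((2 * (π * x) : ℝ) : ℂ) * Complex.I := by
        push_cast; ring
      rw [hc_def, h, Complex.exp_mul_I, ← Complex.ofReal_cos, ← Complex.ofReal_sin,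
        Real.cos_two_mul, Real.sin_two_mul]
      push_cast
      ring
    have hpyth : ((Real.sin (π*x) : ℂ))^2 + ((Real.cos (π*x) : ℂ))^2 = 1 := by
      exact_mod_cast congrArg (Complex.ofReal ·) (Real.sin_sq_add_cos_sq (π*x))
    have hsinC : ((Real.sin (π*x)) : ℂ) ≠ 0 := Complex.ofReal_ne_zero.mpr hsin
    rw [hc2] at h1c ⊢
    rw [Real.cot_eq_cos_div_sin, Complex.ofReal_div]
    set S := ((Real.sin (π*x)) : ℂ)
    set C := ((Real.cos (π*x)) : ℂ)
    rw [div_eq_iff h1c, div_eq_mul_inv C S]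
    linear_combination (Complex.I*C*S⁻¹) * hpyth + C^2 * Complex.I_sq + (C^2*Complex.I^2 - S*C*Complex.I) * mul_inv_cancel₀ hsinC
end

section
/- For 0 < x < 1, the limit as s → 1⁻ of ∑_{n=1}^∞ (−1)^{n+1} cos(nπx)/n^{1-s} equals 1/2. -/
open Filter Real Topology

lemma delta_anti (σ : ℝ) (hσ : 0 < σ) (u : ℝ) (hu : 1 ≤ u) :
    2 * (u + 1) ^ (-σ) ≤ u ^ (-σ) + (u + 2) ^ (-σ) := by
  have hu0 : (0:ℝ) < u := by linarith
  have hu2 : (0:ℝ) < u + 2 := by linarith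
  have e1 : u ^ (-(σ/2)) * u ^ (-(σ/2)) = u ^ (-σ) := by
    rw [← Real.rpow_add hu0]; ring_nf
  have e2 : (u+2) ^ (-(σ/2)) * (u+2) ^ (-(σ/2)) = (u+2) ^ (-σ) := by
    rw [← Real.rpow_add hu2]; ring_nf
  have e3 : u ^ (-(σ/2)) * (u+2) ^ (-(σ/2)) = (u * (u+2)) ^ (-(σ/2)) := by
    rw [Real.mul_rpow hu0.le hu2.le]
  have h4 : ((u+1)^2) ^ (-(σ/2)) ≤ (u * (u+2)) ^ (-(σ/2)) := by
    apply Real.rpow_le_rpow_of_nonpos (by positivity) (by nlinarith) (by linarith)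
  have h5 : ((u+1)^2 : ℝ) ^ (-(σ/2)) = (u+1) ^ (-σ) := by
    rw [← Real.rpow_natCast (u+1) 2, ← Real.rpow_mul (by linarith)]
    ring_nf
  nlinarith [sq_nonneg (u ^ (-(σ/2)) - (u+2) ^ (-(σ/2)))]

lemma aux_limit (w : ℂ) (hw : ‖w‖ = 1) (hw1 : w ≠ 1) (σ : ℝ) (hσ : 0 < σ) :
    ∃ L : ℂ,
      Tendsto (fun N : ℕ => ∑ n ∈ Finset.range N,
        ((((n:ℝ)+1) ^ (-σ) : ℝ) : ℂ) * w ^ (n+1)) atTop (𝓝 L) ∧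
      ‖L - w/(1-w)‖ ≤ 2/‖1-w‖^2 * (1 - (2:ℝ) ^ (-σ)) := by
  have hd : (1:ℂ) - w ≠ 0 := sub_ne_zero.mpr (Ne.symm hw1)
  have hdn : (0:ℝ) < ‖(1:ℂ) - w‖ := norm_pos_iff.mpr hd
  set C : ℝ := 2/‖(1:ℂ) - w‖ with hC
  have hC0 : 0 ≤ C := by positivity
  -- geometric sums
  have hGk : ∀ (k N : ℕ), ∑ i ∈ Finset.range N, w ^ (i+k) = w^k * (w^N - 1)/(w - 1) := by
    intro k N
    rw [mul_div_assoc, ← geom_sum_eq hw1, Finset.mul_sum]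
    exact Finset.sum_congr rfl fun i _ => by rw [pow_add, mul_comm]
  have hGb : ∀ (k N : ℕ), ‖∑ i ∈ Finset.range N, w ^ (i+k)‖ ≤ C := by
    intro k N
    rw [hGk, hC, mul_div_assoc, norm_mul, norm_pow, hw, one_pow, one_mul, norm_div,
      norm_sub_rev w 1]
    gcongr
    calc ‖w^N - 1‖ ≤ ‖w^N‖ + ‖(1:ℂ)‖ := norm_sub_le _ _
    _ = 2 := by rw [norm_pow, hw]; norm_num
  -- the sequence a and its differences
  set a : ℕ → ℝ := fun n => ((n:ℝ)+1) ^ (-σ) with ha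
  have ha0 : a 0 = 1 := by simp [ha]
  have hapos : ∀ n, 0 < a n := fun n => by positivity
  have hamono : ∀ n, a (n+1) ≤ a n := by
    intro n
    apply Real.rpow_le_rpow_of_nonpos (by positivity) (by push_cast; linarith) (by linarith)
  set Δ : ℕ → ℝ := fun n => a n - a (n+1) with hΔ
  have hΔ0 : ∀ n, 0 ≤ Δ n := fun n => sub_nonneg.mpr (hamono n)
  have hΔmono : ∀ n, Δ (n+1) ≤ Δ n := by
    intro n
    have := delta_anti σ hσ ((n:ℝ)+1) (by push_cast; linarith)
    simp only [hΔ, ha]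
    push_cast
    have e3 : ((n:ℝ)+1+1+1) = (n:ℝ)+1+2 := by ring
    rw [e3]
    linarith
  have hΔtel : ∀ M, ∑ i ∈ Finset.range M, Δ i = a 0 - a M :=
    fun M => Finset.sum_range_sub' a M
  -- second Abel bound
  have hΔbd : ∀ N, ‖∑ i ∈ Finset.range N, ((Δ i : ℝ):ℂ) * w ^ (i+2)‖ ≤ C * Δ 0 := by
    intro N
    rcases Nat.eq_zero_or_pos N with h | h
    · simp only [h, Finset.range_zero, Finset.sum_empty, norm_zero]
      exact mul_nonneg hC0 (hΔ0 0)
    · have hb := Finset.sum_range_by_parts (fun i => ((Δ i : ℝ):ℂ)) (fun i => w ^ (i+2)) N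
      simp only [smul_eq_mul] at hb
      rw [hb]
      have step1 : ‖((Δ (N-1) : ℝ):ℂ) * ∑ i ∈ Finset.range N, w ^ (i+2)‖ ≤ Δ (N-1) * C := by
        rw [norm_mul, Complex.norm_real, Real.norm_of_nonneg (hΔ0 _)]
        exact mul_le_mul_of_nonneg_left (hGb 2 N) (hΔ0 _)
      have step2 : ‖∑ i ∈ Finset.range (N-1),
          (((Δ (i+1) : ℝ):ℂ) - ((Δ i : ℝ):ℂ)) * ∑ j ∈ Finset.range (i+1), w ^ (j+2)‖
          ≤ (Δ 0 - Δ (N-1)) * C := by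
        calc _ ≤ ∑ i ∈ Finset.range (N-1),
            ‖(((Δ (i+1) : ℝ):ℂ) - ((Δ i : ℝ):ℂ)) * ∑ j ∈ Finset.range (i+1), w ^ (j+2)‖ :=
              norm_sum_le _ _
        _ ≤ ∑ i ∈ Finset.range (N-1), (Δ i - Δ (i+1)) * C := by
            apply Finset.sum_le_sum
            intro i _
            rw [norm_mul, ← Complex.ofReal_sub, Complex.norm_real, Real.norm_eq_abs,
              abs_of_nonpos (by linarith [hΔmono i])]
            have : -(Δ (i+1) - Δ i) = Δ i - Δ (i+1) := by ring
            rw [this]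
            exact mul_le_mul_of_nonneg_left (hGb 2 (i+1)) (by linarith [hΔmono i])
        _ = (Δ 0 - Δ (N-1)) * C := by
            rw [← Finset.sum_mul, Finset.sum_range_sub' Δ (N-1)]
      calc ‖_ - _‖ ≤ _ := norm_sub_le _ _
      _ ≤ Δ (N-1) * C + (Δ 0 - Δ (N-1)) * C := add_le_add step1 step2
      _ = C * Δ 0 := by ring
  -- summability
  have hsumΔ : Summable Δ := summable_of_sum_range_le hΔ0 (fun n => by
    rw [hΔtel]; linarith [hapos n, le_refl (a 0)])
  have hsummC : Summable (fun i => ((Δ i : ℝ):ℂ) * w ^ (i+2)) := by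
    apply Summable.of_norm
    have he : (fun i => ‖((Δ i : ℝ):ℂ) * w ^ (i+2)‖) = Δ := by
      funext i
      rw [norm_mul, Complex.norm_real, Real.norm_of_nonneg (hΔ0 i), norm_pow, hw, one_pow,
        mul_one]
    rw [he]; exact hsumΔ
  set T : ℂ := ∑' i, ((Δ i : ℝ):ℂ) * w ^ (i+2) with hT
  have hTlim : Tendsto (fun N => ∑ i ∈ Finset.range N, ((Δ i : ℝ):ℂ) * w ^ (i+2)) atTop (𝓝 T) :=
    hsummC.hasSum.tendsto_sum_nat
  have hTbd : ‖T‖ ≤ C * Δ 0 :=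
    le_of_tendsto hTlim.norm (Filter.Eventually.of_forall hΔbd)
  have hatend : Tendsto a atTop (𝓝 0) := by
    have h1 : Tendsto (fun n : ℕ => ((n:ℝ)+1)) atTop atTop :=
      tendsto_atTop_add_const_right _ 1 tendsto_natCast_atTop_atTop
    exact (tendsto_rpow_neg_atTop hσ).comp h1
  have hsub : Tendsto (fun N : ℕ => N - 1) atTop atTop := tendsto_sub_atTop_nat 1
  refine ⟨w/(1-w) - T/(1-w), ?_, ?_⟩
  · -- the limit statement
    have hG1 : ∀ i : ℕ, ∑ j ∈ Finset.range (i+1), w ^ (j+1) = w/(1-w) - w^(i+2)/(1-w) := by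
      intro i
      rw [hGk 1 (i+1)]
      field_simp [sub_ne_zero.mpr hw1]
      ring
    have hP : ∀ N, ∑ n ∈ Finset.range N, ((a n : ℝ):ℂ) * w ^ (n+1)
        = ((a (N-1) : ℝ):ℂ) * (∑ i ∈ Finset.range N, w ^ (i+1))
          + ((a 0 - a (N-1) : ℝ):ℂ) * (w/(1-w))
          - (∑ i ∈ Finset.range (N-1), ((Δ i : ℝ):ℂ) * w ^ (i+2)) / (1-w) := by
      intro N
      have hb := Finset.sum_range_by_parts (fun i => ((a i : ℝ):ℂ)) (fun i => w ^ (i+1)) N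
      simp only [smul_eq_mul] at hb
      rw [hb]
      have key : ∑ i ∈ Finset.range (N-1),
            (((a (i+1):ℝ):ℂ) - ((a i:ℝ):ℂ)) * ∑ j ∈ Finset.range (i+1), w^(j+1)
          = ∑ i ∈ Finset.range (N-1),
            (-(((Δ i:ℝ):ℂ) * (w/(1-w))) + (((Δ i:ℝ):ℂ) * w^(i+2))/(1-w)) := by
        refine Finset.sum_congr rfl fun i _ => ?_
        rw [hG1 i]
        have hcast : ((a (i+1):ℝ):ℂ) - ((a i:ℝ):ℂ) = -((Δ i:ℝ):ℂ) := by
          simp only [hΔ]; push_cast; ring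
        rw [hcast]; ring
      rw [key]
      have hcast2 : ((a 0 - a (N-1) : ℝ):ℂ) = ∑ i ∈ Finset.range (N-1), ((Δ i:ℝ):ℂ) := by
        rw [← hΔtel]
        push_cast
        rfl
      rw [hcast2, Finset.sum_add_distrib, Finset.sum_neg_distrib, ← Finset.sum_mul,
        ← Finset.sum_div]
      ring
    have t1 : Tendsto (fun N : ℕ =>
        ((a (N-1) : ℝ):ℂ) * (∑ i ∈ Finset.range N, w ^ (i+1))) atTop (𝓝 0) := by
      apply squeeze_zero_norm' (a := fun N : ℕ => a (N-1) * C)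
      · refine Filter.Eventually.of_forall fun N => ?_
        rw [norm_mul, Complex.norm_real, Real.norm_of_nonneg (hapos _).le]
        exact mul_le_mul_of_nonneg_left (hGb 1 N) (hapos _).le
      · have := (hatend.comp hsub).mul_const C
        simpa using this
    have t2 : Tendsto (fun N : ℕ => ((a 0 - a (N-1) : ℝ):ℂ) * (w/(1-w))) atTop
        (𝓝 (w/(1-w))) := by
      have hr : Tendsto (fun N : ℕ => a 0 - a (N-1)) atTop (𝓝 1) := by
        have := (tendsto_const_nhds (x := a 0) (f := atTop (α := ℕ))).sub (hatend.comp hsub)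
        simpa [ha0] using this
      have hc : Tendsto (fun N : ℕ => ((a 0 - a (N-1) : ℝ):ℂ)) atTop (𝓝 (1:ℂ)) := by
        have := (Complex.continuous_ofReal.tendsto 1).comp hr
        simpa [Function.comp_def] using this
      have := hc.mul_const (w/(1-w))
      simpa using this
    have t3 : Tendsto (fun N : ℕ =>
        (∑ i ∈ Finset.range (N-1), ((Δ i : ℝ):ℂ) * w ^ (i+2)) / (1-w)) atTop
        (𝓝 (T/(1-w))) := by
      exact (hTlim.comp hsub).div_const (1-w)
    have := (t1.add t2).sub t3
    simp only [zero_add] at this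
    have hfun : (fun N : ℕ => ∑ n ∈ Finset.range N, ((a n : ℝ):ℂ) * w ^ (n+1))
        = fun N : ℕ => ((a (N-1) : ℝ):ℂ) * (∑ i ∈ Finset.range N, w ^ (i+1))
          + ((a 0 - a (N-1) : ℝ):ℂ) * (w/(1-w))
          - (∑ i ∈ Finset.range (N-1), ((Δ i : ℝ):ℂ) * w ^ (i+2)) / (1-w) := funext hP
    rw [show (fun N : ℕ => ∑ n ∈ Finset.range N, ((((n:ℝ)+1) ^ (-σ) : ℝ):ℂ) * w ^ (n+1))
        = fun N : ℕ => ∑ n ∈ Finset.range N, ((a n : ℝ):ℂ) * w ^ (n+1) from rfl, hfun]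
    exact this
  · -- the bound
    have heq : ‖(w/(1-w) - T/(1-w)) - w/(1-w)‖ = ‖T‖/‖1-w‖ := by
      rw [show w/(1-w) - T/(1-w) - w/(1-w) = -(T/(1-w)) by ring, norm_neg, norm_div]
    rw [heq]
    have hΔ0val : Δ 0 = 1 - (2:ℝ)^(-σ) := by
      simp only [hΔ, ha]
      norm_num
    calc ‖T‖/‖(1:ℂ)-w‖ ≤ (C * Δ 0)/‖(1:ℂ)-w‖ := by gcongr
    _ = 2/‖(1:ℂ)-w‖^2 * (1 - (2:ℝ)^(-σ)) := by
        rw [hΔ0val, hC]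
        field_simp


/-- For `0 < x < 1`, the limit as `s → 1⁻` of `∑_{n=1}^∞ (-1)^{n+1} cos(nπx)/n^{1-s}`
equals `1/2`. -/
theorem stmt4 (x : ℝ) (hx0 : 0 < x) (hx1 : x < 1) (F : ℝ → ℝ)
    (hF : ∀ s : ℝ, s < 1 →
      Tendsto (fun N : ℕ => ∑ n ∈ Finset.range N,
        (-1 : ℝ) ^ n * Real.cos ((n + 1) * π * x) / ((n : ℝ) + 1) ^ (1 - s)) atTop (𝓝 (F s))) :
    Tendsto F (𝓝[<] 1) (𝓝 (1 / 2)) := by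
  set θ : ℝ := π * x with hθ
  have hθ0 : 0 < θ := mul_pos Real.pi_pos hx0
  have hθπ : θ < π := by nlinarith [Real.pi_pos]
  set w : ℂ := -Complex.exp (θ * Complex.I) with hwdef
  have hsin : 0 < Real.sin θ := Real.sin_pos_of_pos_of_lt_pi hθ0 hθπ
  have hcos : -1 < Real.cos θ := by nlinarith [Real.sin_sq_add_cos_sq θ]
  have hw : ‖w‖ = 1 := by
    rw [hwdef, norm_neg]
    exact Complex.norm_exp_ofReal_mul_I θ
  have hwre : w.re = -Real.cos θ := by
    rw [hwdef, Complex.neg_re, Complex.exp_ofReal_mul_I_re]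
  have hw1 : w ≠ 1 := by
    intro h
    have h1 : w.re = 1 := by rw [h]; simp
    rw [hwre] at h1; linarith
  have hd : (1:ℂ) - w ≠ 0 := sub_ne_zero.mpr (Ne.symm hw1)
  have hdn : (0:ℝ) < ‖(1:ℂ) - w‖ := norm_pos_iff.mpr hd
  have hre : (w/(1-w)).re = -(1/2) := by
    have hnsq : Complex.normSq w = 1 := by
      rw [Complex.normSq_eq_norm_sq, hw]; norm_num
    have hab : w.re * w.re + w.im * w.im = 1 := by
      rw [← Complex.normSq_apply]; exact hnsq
    have hare : w.re < 1 := by rw [hwre]; linarith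
    rw [Complex.div_re]
    simp only [Complex.sub_re, Complex.sub_im, Complex.one_re, Complex.one_im,
      Complex.normSq_apply]
    have h2 : (0:ℝ) < 2 - 2*w.re := by linarith
    have hD : (1 - w.re) * (1 - w.re) + (0 - w.im) * (0 - w.im) = 2 - 2*w.re := by
      nlinarith [hab]
    rw [hD]
    rw [← add_div, div_eq_iff h2.ne']
    nlinarith [hab]
  set K : ℝ := 2/‖(1:ℂ)-w‖^2 with hK
  have hK0 : 0 ≤ K := by positivity
  have hbound : ∀ s : ℝ, s < 1 → |F s - 1/2| ≤ K * (1 - (2:ℝ)^(-(1-s))) := by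
    intro s hs
    have hσ : 0 < 1 - s := by linarith
    obtain ⟨L, hL1, hL2⟩ := aux_limit w hw hw1 (1-s) hσ
    have hterm : ∀ n : ℕ, (-1:ℝ)^n * Real.cos (((n:ℝ)+1) * π * x) / ((n:ℝ)+1) ^ (1-s)
        = -(((((n:ℝ)+1) ^ (-(1-s)) : ℝ):ℂ) * w ^ (n+1)).re := by
      intro n
      have hwp : w ^ (n+1)
          = (((-1:ℝ)^(n+1) : ℝ):ℂ) * Complex.exp ((((n:ℝ)+1)*θ : ℝ) * Complex.I) := by
        rw [hwdef, neg_pow, ← Complex.exp_nat_mul]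
        push_cast
        ring_nf
      rw [hwp, show ((((n:ℝ)+1) ^ (-(1-s)) : ℝ):ℂ) * ((((-1:ℝ)^(n+1) : ℝ):ℂ)
            * Complex.exp ((((n:ℝ)+1)*θ : ℝ) * Complex.I))
          = (((((n:ℝ)+1) ^ (-(1-s)) * (-1:ℝ)^(n+1) : ℝ)):ℂ)
            * Complex.exp ((((n:ℝ)+1)*θ : ℝ) * Complex.I) by push_cast; ring,
        Complex.re_ofReal_mul, Complex.exp_ofReal_mul_I_re]
      rw [show ((n:ℝ)+1) * π * x = ((n:ℝ)+1)*θ by rw [hθ]; ring]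
      rw [Real.rpow_neg (by positivity)]
      ring
    have hFs : F s = -L.re := by
      have hps : (fun N : ℕ => ∑ n ∈ Finset.range N,
            (-1:ℝ)^n * Real.cos (((n:ℝ)+1) * π * x) / ((n:ℝ)+1) ^ (1-s))
          = fun N => -(∑ n ∈ Finset.range N,
            ((((n:ℝ)+1) ^ (-(1-s)) : ℝ):ℂ) * w ^ (n+1)).re := by
        funext N
        rw [Complex.re_sum, ← Finset.sum_neg_distrib]
        exact Finset.sum_congr rfl fun n _ => hterm n
      have h2 := hF s hs
      rw [hps] at h2
      have h3 : Tendsto (fun N : ℕ => -(∑ n ∈ Finset.range N,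
          ((((n:ℝ)+1) ^ (-(1-s)) : ℝ):ℂ) * w ^ (n+1)).re) atTop (𝓝 (-L.re)) := by
        have := ((Complex.continuous_re.tendsto L).comp hL1).neg
        simpa [Function.comp_def] using this
      exact tendsto_nhds_unique h2 h3
    calc |F s - 1/2| = |(w/(1-w) - L).re| := by
          rw [hFs, Complex.sub_re, hre]; congr 1; ring
    _ ≤ ‖w/(1-w) - L‖ := by
          exact Complex.abs_re_le_norm _
    _ = ‖L - w/(1-w)‖ := norm_sub_rev _ _
    _ ≤ K * (1 - (2:ℝ)^(-(1-s))) := by rw [hK]; exact hL2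
  rw [← tendsto_sub_nhds_zero_iff]
  apply squeeze_zero_norm' (a := fun s : ℝ => K * (1 - (2:ℝ)^(-(1-s))))
  · filter_upwards [self_mem_nhdsWithin] with s hs
    simpa [Real.norm_eq_abs] using hbound s (Set.mem_Iio.mp hs)
  · have hcont : Continuous (fun s : ℝ => K * (1 - (2:ℝ)^(-(1-s)))) := by
      have h2 : ∀ s : ℝ, (2:ℝ)^(-(1-s)) = Real.exp (Real.log 2 * (-(1-s))) := by
        intro s
        rw [Real.rpow_def_of_pos (by norm_num)]
      have : Continuous (fun s : ℝ => (2:ℝ)^(-(1-s))) := by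
        simp only [h2]
        exact Real.continuous_exp.comp (by continuity)
      continuity
    have := (hcont.tendsto 1).mono_left (nhdsWithin_le_nhds (s := Set.Iio (1:ℝ)))
    simpa using this
end

section
/- The limit as s → 0⁺ of ∑_{n=1}^∞ (−1)^n (log n)·(2πn)^s equals (1/2)·log(π/2). -/
open Filter Real Topology

local notation "γ" => Real.eulerMascheroniConstant
local notation "πc" => (Real.pi : ℂ)

noncomputable def Lc : ℂ := Complex.log (2 * πc)

noncomputable def Afun (t : ℂ) : ℂ :=
  -2 * Complex.exp (Lc * (-1 - t)) * Complex.Gamma (1 + t)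

lemma two_pi_ne : (2 * πc) ≠ 0 := by
  simp [Complex.ofReal_ne_zero, Real.pi_ne_zero]

lemma exp_neg_Lc : Complex.exp (Lc * (-1 - 0)) = (2 * πc)⁻¹ := by
  rw [sub_zero, mul_neg_one, Complex.exp_neg]
  rw [show Lc = Complex.log (2 * πc) from rfl, Complex.exp_log two_pi_ne]

lemma Afun_zero : Afun 0 = -(πc)⁻¹ := by
  rw [Afun, exp_neg_Lc]
  norm_num [Complex.Gamma_one, mul_inv]
  ring

lemma gamma_deriv_complex : HasDerivAt Complex.Gamma (-(γ:ℂ)) 1 := by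
  have hd : DifferentiableAt ℂ Complex.Gamma 1 := by
    apply Complex.differentiableAt_Gamma
    intro m
    intro h
    have : (1:ℂ).re = (-(m:ℂ)).re := by rw [h]
    simp at this
    linarith [Nat.cast_nonneg (α := ℝ) m]
  have hD : HasDerivAt Complex.Gamma (deriv Complex.Gamma 1) 1 := hd.hasDerivAt
  set d := deriv Complex.Gamma 1 with hdd
  have h1 : HasDerivAt Complex.Gamma d ((1:ℝ):ℂ) := by simpa using hD
  have hre : HasDerivAt (fun x : ℝ => (Complex.Gamma (x:ℂ)).re) d.re 1 :=
    h1.real_of_complex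
  have hre' : HasDerivAt Real.Gamma d.re 1 := by
    have : (fun x : ℝ => (Complex.Gamma (x:ℂ)).re) = Real.Gamma := by
      funext x; rw [Complex.Gamma_ofReal, Complex.ofReal_re]
    rwa [this] at hre
  have him : HasDerivAt (fun x : ℝ => ((-Complex.I) * Complex.Gamma (x:ℂ)).re)
      ((-Complex.I) * d).re 1 := (h1.const_mul (-Complex.I)).real_of_complex
  have him' : ((-Complex.I) * d).re = 0 := by
    have : (fun x : ℝ => ((-Complex.I) * Complex.Gamma (x:ℂ)).re) = fun x : ℝ => x * 0 := by
      funext x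
      rw [Complex.Gamma_ofReal]
      simp
    rw [this] at him
    have h0 : HasDerivAt (fun x : ℝ => x * 0) (0:ℝ) 1 := by
      simpa using (hasDerivAt_id (1:ℝ)).mul_const (0:ℝ)
    exact him.unique h0
  have hre_val : d.re = -γ := by
    have := Real.eulerMascheroniConstant_eq_neg_deriv
    have h2 : deriv Real.Gamma 1 = d.re := hre'.deriv
    rw [h2] at this
    linarith
  have him_val : d.im = 0 := by
    simpa using him'
  have : d = -(γ:ℂ) := by
    apply Complex.ext <;> simp [hre_val, him_val]
  rw [← this]
  simpa using h1

lemma hasDerivAt_Afun :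
    HasDerivAt Afun ((Lc + γ) / πc) 0 := by
  have hinner : HasDerivAt (fun t : ℂ => Lc * (-1 - t)) (-Lc) 0 := by
    have h : HasDerivAt (fun t : ℂ => -1 - t) (-1) 0 := (hasDerivAt_id 0).const_sub (-1)
    simpa [mul_comm] using h.const_mul Lc
  have hexp : HasDerivAt (fun t : ℂ => Complex.exp (Lc * (-1 - t)))
      (Complex.exp (Lc * (-1 - 0)) * -Lc) 0 := hinner.cexp
  have hshift : HasDerivAt (fun t : ℂ => (1:ℂ) + t) 1 0 := (hasDerivAt_id 0).const_add 1
  have hgam : HasDerivAt (fun t : ℂ => Complex.Gamma (1 + t)) (-(γ:ℂ)) 0 := by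
    have hg1 : HasDerivAt Complex.Gamma (-(γ:ℂ)) ((fun t : ℂ => (1:ℂ) + t) 0) := by
      simpa using gamma_deriv_complex
    have := hg1.comp 0 hshift
    rw [mul_one] at this
    exact this
  have hmul : HasDerivAt (fun t : ℂ => -2 * Complex.exp (Lc * (-1 - t)))
      (-2 * (Complex.exp (Lc * (-1 - 0)) * -Lc)) 0 := hexp.const_mul (-2)
  have key := hmul.mul hgam
  have heq : HasDerivAt Afun
      (-2 * (Complex.exp (Lc * (-1 - 0)) * -Lc) * Complex.Gamma (1 + 0)
        + -2 * Complex.exp (Lc * (-1 - 0)) * -(γ:ℂ)) 0 := key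
  convert heq using 1
  rw [exp_neg_Lc]
  norm_num [Complex.Gamma_one]
  field_simp [Complex.ofReal_ne_zero.mpr Real.pi_ne_zero]

lemma fe_eq {t : ℂ} (ht : t ≠ 0) (ht1 : ‖t‖ < 1) :
    riemannZeta (-t) = Afun t * Complex.sin (πc * t / 2) * riemannZeta (1 + t) := by
  have hs : ∀ n : ℕ, (1 + t) ≠ -(n:ℂ) := by
    intro n h
    have ht' : t = (((-1 - (n:ℝ)) : ℝ) : ℂ) := by push_cast; linear_combination h
    rw [ht'] at ht1
    simp only [Complex.norm_real, Real.norm_eq_abs] at ht1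
    have hn : (0:ℝ) ≤ n := Nat.cast_nonneg n
    rw [abs_of_nonpos (by linarith)] at ht1
    linarith
  have hs' : (1 + t) ≠ 1 := by
    intro h; exact ht (by linear_combination h)
  have := riemannZeta_one_sub hs hs'
  have h1 : (1:ℂ) - (1 + t) = -t := by ring
  rw [h1] at this
  rw [this]
  have hcos : Complex.cos (πc * (1 + t) / 2) = -Complex.sin (πc * t / 2) := by
    have harg : πc * (1 + t) / 2 = πc/2 + πc * t / 2 := by ring
    rw [harg, Complex.cos_add, Complex.cos_pi_div_two, Complex.sin_pi_div_two]
    ring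
  have hpow : (2 * πc) ^ (-(1 + t)) = Complex.exp (Lc * (-1 - t)) := by
    rw [Complex.cpow_def_of_ne_zero two_pi_ne]
    congr 1
    rw [show Lc = Complex.log (2 * πc) from rfl]
    ring
  rw [hcos, hpow, Afun]
  ring

lemma tendsto_neg_l0 : Tendsto (fun t : ℂ => -t) (𝓝[≠] (0:ℂ)) (𝓝[≠] (0:ℂ)) := by
  rw [tendsto_nhdsWithin_iff]
  constructor
  · have := (continuous_neg : Continuous (fun t : ℂ => -t)).tendsto 0
    rw [neg_zero] at this
    exact this.mono_left nhdsWithin_le_nhds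
  · filter_upwards [self_mem_nhdsWithin] with t ht
    simpa using ht

lemma tendsto_one_add_l0 : Tendsto (fun t : ℂ => 1 + t) (𝓝[≠] (0:ℂ)) (𝓝[≠] (1:ℂ)) := by
  rw [tendsto_nhdsWithin_iff]
  constructor
  · have : Tendsto (fun t : ℂ => 1 + t) (𝓝 0) (𝓝 (1 + 0)) :=
      (continuous_const.add continuous_id).tendsto 0
    rw [add_zero] at this
    exact this.mono_left nhdsWithin_le_nhds
  · filter_upwards [self_mem_nhdsWithin] with t ht
    simp only [Set.mem_compl_iff, Set.mem_singleton_iff]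
    intro h
    apply ht
    simp only [Set.mem_singleton_iff]
    linear_combination h

lemma zeta_deriv_zero : deriv riemannZeta 0 = -Lc / 2 := by
  set Z := deriv riemannZeta 0 with hZdef
  set A0 : ℂ := -(πc)⁻¹ with hA0
  have hπ : (πc) ≠ 0 := Complex.ofReal_ne_zero.mpr Real.pi_ne_zero
  have hA0ne : A0 ≠ 0 := by simp [hA0, hπ]
  set σf : ℂ → ℂ := fun t => Complex.sin (πc * t / 2) / t with hσf
  -- limit of Afun
  have hAcont : Tendsto Afun (𝓝[≠] (0:ℂ)) (𝓝 A0) := by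
    rw [hA0, ← Afun_zero]
    exact hasDerivAt_Afun.continuousAt.continuousWithinAt
  -- limit of zeta minus pole
  have hC : Tendsto (fun t : ℂ => riemannZeta (1 + t) - 1 / t) (𝓝[≠] (0:ℂ)) (𝓝 (γ:ℂ)) := by
    have := tendsto_riemannZeta_sub_one_div.comp tendsto_one_add_l0
    have heq : (fun t : ℂ => riemannZeta (1 + t) - 1 / t)
        = (fun s : ℂ => riemannZeta s - 1 / (s - 1)) ∘ (fun t => 1 + t) := by
      funext t; simp [Function.comp]
    rw [heq]; exact this
  -- limit of sin(pi t/2)/t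
  have hσ : Tendsto σf (𝓝[≠] (0:ℂ)) (𝓝 (πc / 2)) := by
    have hinner : HasDerivAt (fun t : ℂ => πc * t / 2) (πc / 2) 0 := by
      simpa using ((hasDerivAt_id (0:ℂ)).const_mul πc).div_const 2
    have hsin : HasDerivAt Complex.sin (Complex.cos (πc * 0 / 2)) (πc * 0 / 2) :=
      Complex.hasDerivAt_sin _
    have hcomp := hsin.comp 0 hinner
    have h2 : HasDerivAt (fun t : ℂ => Complex.sin (πc * t / 2)) (πc / 2) 0 := by
      have : Complex.cos (πc * 0 / 2) * (πc / 2) = πc / 2 := by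
        norm_num [Complex.cos_zero]
      rwa [this] at hcomp
    have := hasDerivAt_iff_tendsto_slope.mp h2
    apply this.congr'
    filter_upwards [self_mem_nhdsWithin] with t ht
    rw [slope_def_field]
    norm_num [hσf]
  -- slope of zeta at 0, composed with neg
  have hU : Tendsto (fun t : ℂ => (riemannZeta (-t) + 1/2) / t) (𝓝[≠] (0:ℂ)) (𝓝 (-Z)) := by
    have hZd : HasDerivAt riemannZeta Z 0 :=
      (differentiableAt_riemannZeta (by norm_num)).hasDerivAt
    have hs := (hasDerivAt_iff_tendsto_slope.mp hZd).comp tendsto_neg_l0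
    have := hs.neg
    apply this.congr'
    filter_upwards [self_mem_nhdsWithin] with t ht
    simp only [Function.comp, slope_def_field, riemannZeta_zero]
    rw [eq_comm]
    field_simp
    ring
  -- main decomposition
  have hT1 : Tendsto (fun t : ℂ => Afun t * σf t * (riemannZeta (1 + t) - 1 / t))
      (𝓝[≠] (0:ℂ)) (𝓝 (A0 * (πc / 2) * γ)) := (hAcont.mul hσ).mul hC
  have hT3 : Tendsto (fun t : ℂ => (Afun t - Afun 0) / t * (πc / 2))
      (𝓝[≠] (0:ℂ)) (𝓝 ((Lc + γ) / πc * (πc / 2))) := by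
    have := (hasDerivAt_iff_tendsto_slope.mp hasDerivAt_Afun).mul_const (πc / 2)
    apply this.congr'
    filter_upwards [self_mem_nhdsWithin] with t ht
    rw [slope_def_field]
    norm_num
  have hEq : ∀ᶠ t in (𝓝[≠] (0:ℂ)),
      (riemannZeta (-t) + 1/2) / t
        = Afun t * σf t * (riemannZeta (1 + t) - 1 / t)
          + Afun t * ((σf t - πc / 2) / t)
          + (Afun t - Afun 0) / t * (πc / 2) := by
    have hball : ∀ᶠ t in (𝓝 (0:ℂ)), ‖t‖ < 1 := by
      have : Tendsto (fun t : ℂ => ‖t‖) (𝓝 0) (𝓝 ‖(0:ℂ)‖) := (continuous_norm).tendsto 0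
      simp only [norm_zero] at this
      exact this.eventually (eventually_lt_nhds one_pos)
    filter_upwards [self_mem_nhdsWithin, eventually_nhdsWithin_of_eventually_nhds hball]
      with t ht0' htb
    have ht0 : t ≠ 0 := ht0'
    rw [fe_eq ht0 htb, Afun_zero]
    simp only [hσf]
    have h5 : (t:ℂ)^5 * (πc) * t⁻¹^5 * (πc)⁻¹ = 1 := by
      rw [inv_pow]
      field_simp
    rw [div_eq_iff ht0]
    field_simp
    ring
  have hT2 : Tendsto (fun t : ℂ => Afun t * ((σf t - πc / 2) / t)) (𝓝[≠] (0:ℂ))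
      (𝓝 (-Z - A0 * (πc / 2) * γ - (Lc + γ) / πc * (πc / 2))) := by
    have hsum := hU.congr' hEq
    have := (hsum.sub hT1).sub hT3
    apply this.congr
    intro t; ring
  -- divide by Afun
  have hD : Tendsto (fun t : ℂ => (σf t - πc / 2) / t) (𝓝[≠] (0:ℂ))
      (𝓝 ((-Z - A0 * (πc / 2) * γ - (Lc + γ) / πc * (πc / 2)) / A0)) := by
    have hAne : ∀ᶠ t in (𝓝[≠] (0:ℂ)), Afun t ≠ 0 := hAcont.eventually_ne hA0ne
    have := hT2.div hAcont hA0ne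
    apply this.congr'
    filter_upwards [hAne] with t hA
    simp only [Pi.div_apply]
    rw [mul_comm, mul_div_assoc, div_self hA, mul_one]
  set lam := (-Z - A0 * (πc / 2) * γ - (Lc + γ) / πc * (πc / 2)) / A0 with hlam
  -- symmetry: lam = 0
  have hlam0 : lam = 0 := by
    have hneg := hD.comp tendsto_neg_l0
    have heq : ∀ᶠ t in (𝓝[≠] (0:ℂ)),
        ((fun t : ℂ => (σf t - πc / 2) / t) ∘ (fun t => -t)) t
          = -((σf t - πc / 2) / t) := by
      filter_upwards [self_mem_nhdsWithin] with t ht0'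
      have ht0 : t ≠ 0 := ht0'
      have hσeven : σf (-t) = σf t := by
        simp only [hσf]
        rw [show πc * -t / 2 = -(πc * t / 2) by ring, Complex.sin_neg]
        rw [neg_div_neg_eq]
      simp only [Function.comp]
      rw [hσeven, div_neg]
    have h1 := hneg.congr' heq
    have h2 := hD.neg
    have := tendsto_nhds_unique h1 h2
    linear_combination this / 2
  -- conclude
  rw [hlam, div_eq_zero_iff] at hlam0
  rcases hlam0 with h | h
  · rw [hA0] at h
    field_simp at h
    linear_combination -h / 2
  · exact absurd h hA0ne

noncomputable def hterm (k : ℕ) (w : ℂ) : ℂ :=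
  ((2*(k:ℝ)+1 : ℝ):ℂ) ^ (-w) - ((2*(k:ℝ)+2 : ℝ):ℂ) ^ (-w)

noncomputable def Gp (N : ℕ) (w : ℂ) : ℂ := ∑ k ∈ Finset.range N, hterm k w

noncomputable def gfun (w : ℂ) : ℂ := ∑' k : ℕ, hterm k w

noncomputable def Pfun (w : ℂ) : ℂ := (1 - (2:ℂ) ^ ((1:ℂ) - w)) * riemannZeta w

def V : Set ℂ := {w | 0 < w.re}

def U : Set ℂ := {w | 0 < w.re ∧ w ≠ 1}

lemma isOpen_V : IsOpen V := isOpen_lt continuous_const Complex.continuous_re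

lemma isOpen_U : IsOpen U := by
  have : U = V ∩ {(1:ℂ)}ᶜ := by
    ext w; simp [U, V, Set.mem_setOf_eq, and_comm]
  rw [this]
  exact isOpen_V.inter (isOpen_compl_singleton)

lemma one_le_b1 (k : ℕ) : (1:ℝ) ≤ 2*(k:ℝ)+1 := by
  have : (0:ℝ) ≤ (k:ℝ) := Nat.cast_nonneg k
  linarith

lemma one_le_b2 (k : ℕ) : (1:ℝ) ≤ 2*(k:ℝ)+2 := by
  have : (0:ℝ) ≤ (k:ℝ) := Nat.cast_nonneg k
  linarith

lemma hasDerivAt_cpow_base {x : ℝ} (hx : 1 ≤ x) (w : ℂ) :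
    HasDerivAt (fun v : ℂ => ((x:ℝ):ℂ) ^ (-v))
      (-Complex.log x * (x:ℂ)^(-w)) w := by
  have hx0 : (x:ℂ) ≠ 0 := by
    simp only [ne_eq, Complex.ofReal_eq_zero]
    linarith
  have hfun : (fun v : ℂ => ((x:ℝ):ℂ) ^ (-v))
      = fun v : ℂ => Complex.exp (Complex.log x * (-v)) := by
    funext v; rw [Complex.cpow_def_of_ne_zero hx0]
  rw [hfun]
  have hinner : HasDerivAt (fun v : ℂ => Complex.log x * (-v)) (-Complex.log x) w := by
    simpa [mul_comm] using ((hasDerivAt_id w).neg.const_mul (Complex.log (x:ℂ)))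
  have := hinner.cexp
  rw [← Complex.cpow_def_of_ne_zero hx0] at this
  convert this using 1
  · rfl
  · ring

lemma hterm_differentiable (k : ℕ) : Differentiable ℂ (hterm k) := by
  intro w
  exact ((hasDerivAt_cpow_base (one_le_b1 k) w).sub
    (hasDerivAt_cpow_base (one_le_b2 k) w)).differentiableAt

lemma Gp_differentiable (N : ℕ) : Differentiable ℂ (Gp N) := by
  intro w
  apply DifferentiableAt.fun_sum
  intro k _
  exact hterm_differentiable k w

noncomputable def dterm (k : ℕ) (w : ℂ) : ℂ :=
  -Complex.log ((2*(k:ℝ)+1 : ℝ):ℂ) * ((2*(k:ℝ)+1 : ℝ):ℂ)^(-w)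
    - (-Complex.log ((2*(k:ℝ)+2 : ℝ):ℂ) * ((2*(k:ℝ)+2 : ℝ):ℂ)^(-w))

lemma hasDerivAt_Gp (N : ℕ) (w : ℂ) :
    HasDerivAt (Gp N) (∑ k ∈ Finset.range N, dterm k w) w := by
  apply HasDerivAt.fun_sum
  intro k _
  have h := (hasDerivAt_cpow_base (one_le_b1 k) w).sub (hasDerivAt_cpow_base (one_le_b2 k) w)
  unfold hterm dterm
  exact h

lemma hterm_bound {δ R : ℝ} (hδ : 0 < δ) (k : ℕ) {w : ℂ}
    (h1 : δ ≤ w.re) (h2 : ‖w‖ ≤ R) :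
    ‖hterm k w‖ ≤ R * (2*(k:ℝ)+1) ^ (-δ-1) := by
  set x1 : ℝ := 2*(k:ℝ)+1 with hx1
  set x2 : ℝ := 2*(k:ℝ)+2 with hx2
  have hx1one : (1:ℝ) ≤ x1 := one_le_b1 k
  have hx1pos : (0:ℝ) < x1 := by linarith
  have hx12 : x1 ≤ x2 := by rw [hx1, hx2]; linarith
  have hw0 : w ≠ 0 := by
    intro h; rw [h] at h1; simp at h1; linarith
  have hkey : ∀ x ∈ Set.Icc x1 x2,
      HasDerivWithinAt (fun y : ℝ => ((y:ℝ):ℂ)^(-w)) (-w * (x:ℂ)^(-w-1)) (Set.Icc x1 x2) x := by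
    intro x hx
    have hxpos : (0:ℝ) < x := lt_of_lt_of_le hx1pos hx.1
    have hr : (-w-1 : ℂ) ≠ -1 := by
      intro h
      apply hw0
      linear_combination -h - 1
    have hd := hasDerivAt_ofReal_cpow_const' hxpos.ne' hr
    have h1' : (-w-1 : ℂ) + 1 = -w := by ring
    rw [h1'] at hd
    have hd2 := hd.const_mul (-w)
    have hfun : (fun y : ℝ => -w * ((y:ℂ)^(-w) / (-w))) = fun y : ℝ => ((y:ℝ):ℂ)^(-w) := by
      funext y
      field_simp
    rw [hfun] at hd2
    exact hd2.hasDerivWithinAt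
  have hbnd : ∀ x ∈ Set.Icc x1 x2, ‖-w * (x:ℂ)^(-w-1)‖ ≤ R * x1 ^ (-δ-1) := by
    intro x hx
    have hxpos : (0:ℝ) < x := lt_of_lt_of_le hx1pos hx.1
    rw [norm_mul, norm_neg]
    rw [show ‖(x:ℂ)^(-w-1)‖ = x ^ ((-w-1).re) from Complex.norm_cpow_eq_rpow_re_of_pos hxpos _]
    have hre : ((-w-1:ℂ)).re = -w.re - 1 := by simp
    rw [hre]
    have step1 : x ^ (-w.re-1) ≤ x1 ^ (-w.re-1) :=
      Real.rpow_le_rpow_of_nonpos hx1pos hx.1 (by linarith)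
    have step2 : x1 ^ (-w.re-1) ≤ x1 ^ (-δ-1) :=
      Real.rpow_le_rpow_of_exponent_le hx1one (by linarith)
    have hwnn : (0:ℝ) ≤ ‖w‖ := norm_nonneg w
    exact mul_le_mul h2 (le_trans step1 step2) (Real.rpow_nonneg hxpos.le _) (le_trans hwnn h2)
  have hmvt := Convex.norm_image_sub_le_of_norm_hasDerivWithin_le hkey hbnd
    (convex_Icc x1 x2) (Set.left_mem_Icc.mpr hx12) (Set.right_mem_Icc.mpr hx12)
  have heq : ‖hterm k w‖ = ‖((x2:ℝ):ℂ)^(-w) - ((x1:ℝ):ℂ)^(-w)‖ := by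
    rw [hterm, norm_sub_rev]
  have hx21 : ‖x2 - x1‖ = 1 := by
    rw [hx1, hx2]
    norm_num
  rw [heq]
  calc ‖((x2:ℝ):ℂ)^(-w) - ((x1:ℝ):ℂ)^(-w)‖
      ≤ R * x1 ^ (-δ-1) * ‖x2 - x1‖ := hmvt
    _ = R * x1 ^ (-δ-1) := by rw [hx21, mul_one]

lemma summable_shift (e : ℝ) (he : e < -1) : Summable (fun k : ℕ => ((k:ℝ)+1) ^ e) := by
  have h1 : Summable (fun k : ℕ => ((k:ℝ)) ^ e) := Real.summable_nat_rpow.mpr he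
  have h2 := (summable_nat_add_iff 1).mpr h1
  apply h2.congr
  intro k
  push_cast
  norm_num

lemma tlu : TendstoLocallyUniformlyOn Gp gfun atTop V := by
  rw [tendstoLocallyUniformlyOn_iff_forall_isCompact isOpen_V]
  intro K hKV hK
  rcases K.eq_empty_or_nonempty with hKe | hKne
  · rw [hKe]; exact tendstoUniformlyOn_empty
  obtain ⟨w0, hw0K, hmin⟩ := hK.exists_isMinOn hKne (Complex.continuous_re.continuousOn)
  set δ := w0.re with hδdef
  have hδ : 0 < δ := hKV hw0K
  obtain ⟨R, hR⟩ := hK.exists_bound_of_continuousOn continuousOn_id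
  have hsum : Summable (fun k : ℕ => R * (2*(k:ℝ)+1) ^ (-δ-1)) := by
    apply Summable.mul_left
    have hcmp : ∀ k : ℕ, (2*(k:ℝ)+1) ^ (-δ-1) ≤ ((k:ℝ)+1) ^ (-δ-1) := by
      intro k
      have : (0:ℝ) ≤ (k:ℝ) := Nat.cast_nonneg k
      exact Real.rpow_le_rpow_of_nonpos (by positivity) (by linarith) (by linarith)
    exact Summable.of_nonneg_of_le
      (fun k => Real.rpow_nonneg (by positivity) _) hcmp (summable_shift _ (by linarith))
  apply tendstoUniformlyOn_tsum_nat hsum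
  intro k w hw
  exact hterm_bound hδ k ((isMinOn_iff.mp hmin) w hw) (hR w hw)

lemma gfun_diffOn : DifferentiableOn ℂ gfun V :=
  tlu.differentiableOn (Filter.Eventually.of_forall fun N => (Gp_differentiable N).differentiableOn)
    isOpen_V

lemma gfun_eq_Pfun_of_one_lt {w : ℂ} (hw : 1 < w.re) : gfun w = Pfun w := by
  set ψ : ℕ → ℂ := fun n => (((n:ℝ)+1 : ℝ):ℂ) ^ (-w) with hψ
  have hnorm : ∀ n : ℕ, ‖ψ n‖ = ((n:ℝ)+1) ^ (-w.re) := by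
    intro n
    have hpos : (0:ℝ) < (n:ℝ)+1 := by positivity
    rw [hψ]
    rw [show ‖(((n:ℝ)+1 : ℝ):ℂ) ^ (-w)‖ = ((n:ℝ)+1) ^ ((-w).re) from
      Complex.norm_cpow_eq_rpow_re_of_pos hpos _]
    simp
  have hsum : Summable ψ := by
    rw [← summable_norm_iff]
    apply Summable.congr (summable_shift (-w.re) (by linarith))
    intro n
    rw [hnorm n]
  have hζ : riemannZeta w = ∑' n : ℕ, ψ n := by
    rw [zeta_eq_tsum_one_div_nat_add_one_cpow hw]
    apply tsum_congr
    intro n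
    have hcast : ((n:ℂ) + 1) = (((n:ℝ)+1 : ℝ):ℂ) := by push_cast; ring
    show (1:ℂ) / ((n:ℂ)+1)^w = (((n:ℝ)+1 : ℝ):ℂ)^(-w)
    rw [← hcast, Complex.cpow_neg, one_div]
  have heven : Summable (fun k : ℕ => ψ (2*k)) :=
    hsum.comp_injective (fun a b h => by omega)
  have hodd : Summable (fun k : ℕ => ψ (2*k+1)) :=
    hsum.comp_injective (fun a b h => by omega)
  have hsplit := tsum_even_add_odd heven hodd
  have hgq : gfun w = (∑' k : ℕ, ψ (2*k)) - ∑' k : ℕ, ψ (2*k+1) := by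
    rw [gfun, ← Summable.tsum_sub heven hodd]
    apply tsum_congr
    intro k
    have e1 : (2*(k:ℝ)+1 : ℝ) = ((2*k:ℕ):ℝ)+1 := by push_cast; ring
    have e2 : (2*(k:ℝ)+2 : ℝ) = ((2*k+1:ℕ):ℝ)+1 := by push_cast; ring
    show ((2*(k:ℝ)+1 : ℝ):ℂ)^(-w) - ((2*(k:ℝ)+2 : ℝ):ℂ)^(-w) = _
    rw [e1, e2]
  have hoddval : ∑' k : ℕ, ψ (2*k+1) = (2:ℂ)^(-w) * riemannZeta w := by
    have : ∀ k : ℕ, ψ (2*k+1) = (2:ℂ)^(-w) * ψ k := by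
      intro k
      rw [hψ]
      have hcast : (((2*k+1:ℕ):ℝ)+1 : ℝ) = (2:ℝ) * ((k:ℝ)+1) := by push_cast; ring
      simp only []
      rw [hcast, Complex.ofReal_mul, Complex.mul_cpow_ofReal_nonneg (by norm_num) (by positivity)]
      norm_num
    rw [tsum_congr this, tsum_mul_left, ← hζ]
  have hevenval : ∑' k : ℕ, ψ (2*k) = riemannZeta w - (2:ℂ)^(-w) * riemannZeta w := by
    rw [eq_sub_iff_add_eq, ← hoddval, hsplit, hζ]
  rw [hgq, hevenval, hoddval, Pfun]
  have h2w : (2:ℂ)^((1:ℂ)-w) = 2 * (2:ℂ)^(-w) := by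
    rw [sub_eq_add_neg, Complex.cpow_add _ _ (two_ne_zero), Complex.cpow_one]
  rw [h2w]
  ring

lemma preconnected_U : IsPreconnected U := by
  have hdecomp : U = (({w : ℂ | 0 < w.re ∧ w.re < 1} ∪ {w : ℂ | 0 < w.im ∧ 0 < w.re})
      ∪ {w : ℂ | 1 < w.re}) ∪ {w : ℂ | w.im < 0 ∧ 0 < w.re} := by
    ext w
    simp only [U, Set.mem_setOf_eq, Set.mem_union]
    constructor
    · rintro ⟨hre, hne⟩
      rcases lt_trichotomy w.re 1 with h | h | h
      · exact Or.inl (Or.inl (Or.inl ⟨hre, h⟩))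
      · rcases lt_trichotomy w.im 0 with h' | h' | h'
        · exact Or.inr ⟨h', hre⟩
        · exfalso; apply hne; apply Complex.ext <;> simp [h, h']
        · exact Or.inl (Or.inl (Or.inr ⟨h', hre⟩))
      · exact Or.inl (Or.inr h)
    · rintro (((⟨h1, h2⟩ | ⟨h1, h2⟩) | h) | ⟨h1, h2⟩)
      · refine ⟨h1, fun he => ?_⟩; rw [he] at h2; simp at h2
      · refine ⟨h2, fun he => ?_⟩; rw [he] at h1; simp at h1
      · refine ⟨by linarith, fun he => ?_⟩; rw [he] at h; simp at h
      · refine ⟨h2, fun he => ?_⟩; rw [he] at h1; simp at h1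
  rw [hdecomp]
  have c1 : Convex ℝ {w : ℂ | 0 < w.re ∧ w.re < 1} := by
    have := (convex_halfSpace_re_gt (0:ℝ)).inter (convex_halfSpace_re_lt (1:ℝ))
    convert this using 1
    rfl
  have c2 : Convex ℝ {w : ℂ | 0 < w.im ∧ 0 < w.re} := by
    have := (convex_halfSpace_im_gt (0:ℝ)).inter (convex_halfSpace_re_gt (0:ℝ))
    convert this using 1
    rfl
  have c3 : Convex ℝ {w : ℂ | 1 < w.re} := convex_halfSpace_re_gt (1:ℝ)
  have c4 : Convex ℝ {w : ℂ | w.im < 0 ∧ 0 < w.re} := by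
    have := (convex_halfSpace_im_lt (0:ℝ)).inter (convex_halfSpace_re_gt (0:ℝ))
    convert this using 1
    rfl
  have p12 : IsPreconnected ({w : ℂ | 0 < w.re ∧ w.re < 1} ∪ {w : ℂ | 0 < w.im ∧ 0 < w.re}) := by
    apply IsPreconnected.union ((1/2 : ℝ) + (1/2 : ℝ) * Complex.I)
    · norm_num [Set.mem_setOf_eq, Complex.add_re, Complex.add_im]
    · norm_num [Set.mem_setOf_eq, Complex.add_re, Complex.add_im]
    · exact c1.isPreconnected
    · exact c2.isPreconnected
  have p123 : IsPreconnected (({w : ℂ | 0 < w.re ∧ w.re < 1} ∪ {w : ℂ | 0 < w.im ∧ 0 < w.re})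
      ∪ {w : ℂ | 1 < w.re}) := by
    apply IsPreconnected.union ((2 : ℝ) + (1 : ℝ) * Complex.I)
    · apply Set.mem_union_right
      norm_num [Set.mem_setOf_eq, Complex.add_re, Complex.add_im]
    · norm_num [Set.mem_setOf_eq, Complex.add_re]
    · exact p12
    · exact c3.isPreconnected
  apply IsPreconnected.union ((1/2 : ℝ) + (-(1/2) : ℝ) * Complex.I)
  · apply Set.mem_union_left
    apply Set.mem_union_left
    norm_num [Set.mem_setOf_eq, Complex.add_re, Complex.add_im]
  · norm_num [Set.mem_setOf_eq, Complex.add_re, Complex.add_im]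
  · exact p123
  · exact c4.isPreconnected

lemma Pfun_diffAt {w : ℂ} (hw : w ≠ 1) : DifferentiableAt ℂ Pfun w := by
  apply DifferentiableAt.mul
  · apply DifferentiableAt.sub (differentiableAt_const 1)
    apply DifferentiableAt.const_cpow
    · exact (differentiableAt_const 1).sub differentiableAt_id
    · exact Or.inl two_ne_zero
  · exact differentiableAt_riemannZeta hw

lemma eqOn_gfun_Pfun : Set.EqOn gfun Pfun U := by
  have hUV : U ⊆ V := fun w hw => hw.1
  have hg : AnalyticOnNhd ℂ gfun U := (gfun_diffOn.mono hUV).analyticOnNhd isOpen_U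
  have hP : AnalyticOnNhd ℂ Pfun U := by
    apply DifferentiableOn.analyticOnNhd _ isOpen_U
    intro w hw
    exact (Pfun_diffAt hw.2).differentiableWithinAt
  have h2 : (2:ℂ) ∈ U := by
    constructor
    · norm_num [V, Set.mem_setOf_eq]
    · norm_num
  apply hg.eqOn_of_preconnected_of_eventuallyEq hP preconnected_U h2
  have hmem : {w : ℂ | 1 < w.re} ∈ 𝓝 (2:ℂ) := by
    apply (isOpen_lt continuous_const Complex.continuous_re).mem_nhds
    norm_num
  exact Filter.eventually_of_mem hmem (fun w hw => gfun_eq_Pfun_of_one_lt hw)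

lemma deriv_gfun_eq {w : ℂ} (hw : w ∈ U) : deriv gfun w = deriv Pfun w := by
  apply Filter.EventuallyEq.deriv_eq
  exact Filter.eventually_of_mem (isOpen_U.mem_nhds hw) (fun v hv => eqOn_gfun_Pfun hv)

lemma tendsto_deriv_Gp {w : ℂ} (hw : w ∈ U) :
    Tendsto (fun N => ∑ k ∈ Finset.range N, dterm k w) atTop (𝓝 (deriv Pfun w)) := by
  have htlud := tlu.deriv
    (Filter.Eventually.of_forall fun N => (Gp_differentiable N).differentiableOn) isOpen_V
  have hpt := htlud.tendsto_at (show w ∈ V from hw.1)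
  have heq : ∀ N, (deriv ∘ Gp) N w = ∑ k ∈ Finset.range N, dterm k w := by
    intro N
    exact (hasDerivAt_Gp N w).deriv
  rw [← deriv_gfun_eq hw]
  exact hpt.congr heq

lemma sum_range_two_mul (f : ℕ → ℝ) (N : ℕ) :
    ∑ n ∈ Finset.range (2*N), f n = ∑ k ∈ Finset.range N, (f (2*k) + f (2*k+1)) := by
  induction N with
  | zero => simp
  | succ n ih =>
    rw [Finset.sum_range_succ, ← ih, Nat.mul_succ]
    rw [show 2*n+2 = (2*n+1)+1 from rfl, Finset.sum_range_succ, Finset.sum_range_succ]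
    ring

lemma cast_pair_sum (s : ℝ) (N : ℕ) :
    ((∑ n ∈ Finset.range (2*N), ((-1:ℝ)^(n+1) * Real.log ((n:ℝ)+1) * ((n:ℝ)+1)^s) : ℝ) : ℂ)
      = ∑ k ∈ Finset.range N, dterm k ((-s:ℝ):ℂ) := by
  rw [sum_range_two_mul, Complex.ofReal_sum]
  apply Finset.sum_congr rfl
  intro k _
  have hodd : (-1:ℝ)^(2*k+1) = -1 := Odd.neg_one_pow ⟨k, rfl⟩
  have heven : (-1:ℝ)^(2*k+1+1) = 1 := Even.neg_one_pow ⟨k+1, by ring⟩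
  have ha : (0:ℝ) < 2*(k:ℝ)+1 := by positivity
  have hb : (0:ℝ) < 2*(k:ℝ)+2 := by positivity
  have hfr : (-1:ℝ)^(2*k+1) * Real.log (((2*k:ℕ):ℝ)+1) * (((2*k:ℕ):ℝ)+1)^s
      + (-1:ℝ)^((2*k+1)+1) * Real.log (((2*k+1:ℕ):ℝ)+1) * (((2*k+1:ℕ):ℝ)+1)^s
      = -Real.log (2*(k:ℝ)+1) * (2*(k:ℝ)+1)^s + Real.log (2*(k:ℝ)+2) * (2*(k:ℝ)+2)^s := by
    rw [hodd, heven]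
    push_cast
    ring
  rw [show ((2*k:ℕ):ℝ) = 2*(k:ℝ) by push_cast; ring] at hfr ⊢
  rw [show ((2*k+1:ℕ):ℝ) = 2*(k:ℝ)+1 by push_cast; ring] at hfr ⊢
  rw [hfr]
  rw [dterm]
  have hw : -(((-s:ℝ)):ℂ) = ((s:ℝ):ℂ) := by push_cast; ring
  rw [hw]
  rw [← Complex.ofReal_cpow ha.le s, ← Complex.ofReal_cpow hb.le s,
    ← Complex.ofReal_log ha.le, ← Complex.ofReal_log hb.le]
  push_cast
  ring

lemma contDerivP : ContinuousAt (deriv Pfun) 0 := by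
  have hdiff : DifferentiableOn ℂ Pfun (Metric.ball 0 1) := by
    intro w hw
    apply (Pfun_diffAt _).differentiableWithinAt
    intro h
    rw [h] at hw
    simp [Metric.mem_ball] at hw
  have := (hdiff.analyticOnNhd Metric.isOpen_ball).deriv
  exact (this 0 (Metric.mem_ball_self one_pos)).continuousAt

lemma derivP0 : deriv Pfun 0 = -(Complex.log 2) + Lc/2 := by
  have hfun : (fun w : ℂ => (2:ℂ)^((1:ℂ)-w)) = fun w => Complex.exp (Complex.log 2 * (1-w)) := by
    funext w; rw [Complex.cpow_def_of_ne_zero two_ne_zero]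
  have hinner : HasDerivAt (fun w : ℂ => Complex.log 2 * (1-w)) (-Complex.log 2) 0 := by
    simpa [mul_comm] using ((hasDerivAt_id (0:ℂ)).const_sub 1).const_mul (Complex.log 2)
  have hexp := hinner.cexp
  rw [← hfun] at hexp
  have hu : HasDerivAt (fun w : ℂ => 1 - (2:ℂ)^((1:ℂ)-w))
      (-(Complex.exp (Complex.log 2 * (1-0)) * -Complex.log 2)) 0 := hexp.const_sub 1
  have hv : HasDerivAt riemannZeta (-Lc/2) 0 := by
    have h := (differentiableAt_riemannZeta (show (0:ℂ) ≠ 1 by norm_num)).hasDerivAt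
    rw [zeta_deriv_zero] at h
    convert h using 1
  have hP := hu.mul hv
  have h2 : Complex.exp (Complex.log 2 * (1-0)) = 2 := by
    norm_num [Complex.exp_log]
  rw [h2] at hP
  have h21 : (2:ℂ)^((1:ℂ)-(0:ℂ)) = 2 := by
    norm_num [Complex.cpow_one]
  rw [riemannZeta_zero] at hP
  have hPf : HasDerivAt Pfun
      (-(2 * -Complex.log 2) * (-1 / 2) + (1 - (2:ℂ) ^ ((1:ℂ) - 0)) * (-Lc / 2)) 0 := hP
  rw [hPf.deriv, h21]
  ring



open Filter Real Topology

/-- The limit as `s → 0` (along real `s < 0`, where the series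
`∑_{n=1}^∞ (-1)^n (log n)·(2πn)^s` converges) equals `(1/2)·log(π/2)`. -/
theorem stmt6 (F : ℝ → ℝ)
    (hF : ∀ s : ℝ, s < 0 →
      Tendsto (fun N : ℕ => ∑ n ∈ Finset.range N,
        (-1 : ℝ) ^ (n + 1) * Real.log (n + 1) * (2 * π * (n + 1)) ^ s) atTop (𝓝 (F s))) :
    Tendsto F (𝓝[<] 0) (𝓝 ((1 / 2) * Real.log (π / 2))) := by
  have hπpos := Real.pi_pos
  have h2π : (0:ℝ) < 2*π := by linarith
  have hA : ∀ᶠ s in (𝓝[<] (0:ℝ)), F s = (2*π)^s * (deriv Pfun ((-s:ℝ):ℂ)).re := by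
    filter_upwards [self_mem_nhdsWithin,
      eventually_nhdsWithin_of_eventually_nhds (eventually_gt_nhds (show (-1:ℝ) < 0 by norm_num))]
      with s hs0' hs1
    have hs0 : s < 0 := hs0'
    have hwU : ((-s:ℝ):ℂ) ∈ U := by
      constructor
      · show (0:ℝ) < (((-s:ℝ):ℂ)).re
        rw [Complex.ofReal_re]; linarith
      · intro h
        rw [show (1:ℂ) = ((1:ℝ):ℂ) by norm_num] at h
        have := Complex.ofReal_inj.mp h
        linarith
    have h1 := tendsto_deriv_Gp hwU
    have h2 : Tendsto (fun N : ℕ => ∑ n ∈ Finset.range (2*N),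
        ((-1:ℝ)^(n+1) * Real.log ((n:ℝ)+1) * ((n:ℝ)+1)^s)) atTop
        (𝓝 ((deriv Pfun ((-s:ℝ):ℂ)).re)) := by
      have hre := (Complex.continuous_re.tendsto (deriv Pfun ((-s:ℝ):ℂ))).comp h1
      apply hre.congr
      intro N
      simp only [Function.comp]
      rw [← cast_pair_sum s N, Complex.ofReal_re]
    have h3 := h2.const_mul ((2*π)^s)
    have h4 : Tendsto (fun N : ℕ => (2*π)^s * ∑ n ∈ Finset.range (2*N),
        ((-1:ℝ)^(n+1) * Real.log ((n:ℝ)+1) * ((n:ℝ)+1)^s)) atTop (𝓝 (F s)) := by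
      have hFs := hF s hs0
      have hcomp := hFs.comp (Filter.tendsto_atTop_atTop.mpr
        (fun b => ⟨b, fun a ha => by omega⟩) : Tendsto (fun N : ℕ => 2*N) atTop atTop)
      apply hcomp.congr
      intro N
      simp only [Function.comp]
      rw [Finset.mul_sum]
      apply Finset.sum_congr rfl
      intro n _
      rw [Real.mul_rpow h2π.le (by positivity)]
      ring
    exact tendsto_nhds_unique h4 h3
  have hBre : Tendsto (fun s : ℝ => (deriv Pfun ((-s:ℝ):ℂ)).re) (𝓝[<] (0:ℝ))
      (𝓝 ((deriv Pfun 0).re)) := by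
    have hmap : Tendsto (fun s : ℝ => ((-s:ℝ):ℂ)) (𝓝[<] (0:ℝ)) (𝓝 (0:ℂ)) := by
      have hc : Continuous (fun s : ℝ => ((-s:ℝ):ℂ)) :=
        Complex.continuous_ofReal.comp continuous_neg
      have := hc.tendsto 0
      simp only [neg_zero, Complex.ofReal_zero] at this
      exact this.mono_left nhdsWithin_le_nhds
    exact (Complex.continuous_re.tendsto _).comp (contDerivP.tendsto.comp hmap)
  have hBpow : Tendsto (fun s : ℝ => (2*π)^s) (𝓝[<] (0:ℝ)) (𝓝 1) := by
    have := (Real.continuousAt_const_rpow (a := 2*π) (b := 0)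
      (show (2*π) ≠ 0 by positivity)).tendsto
    rw [Real.rpow_zero] at this
    exact this.mono_left nhdsWithin_le_nhds
  have hB := hBpow.mul hBre
  rw [one_mul] at hB
  have hval : (deriv Pfun 0).re = (1/2) * Real.log (π/2) := by
    rw [derivP0]
    have hlog2 : Complex.log 2 = ((Real.log 2 : ℝ):ℂ) := by
      rw [Complex.ofReal_log (by norm_num : (0:ℝ) ≤ 2)]
      norm_num
    have hlogL : Lc = ((Real.log (2*π) : ℝ):ℂ) := by
      rw [Complex.ofReal_log h2π.le, Lc]
      push_cast
      ring_nf
    rw [hlog2, hlogL]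
    have hcast : -((Real.log 2 : ℝ):ℂ) + ((Real.log (2*π) : ℝ):ℂ)/2
        = (((1/2) * Real.log (π/2) : ℝ) : ℂ) := by
      rw [Real.log_div (ne_of_gt hπpos) (by norm_num),
        Real.log_mul (by norm_num) (ne_of_gt hπpos)]
      push_cast
      ring
    rw [hcast, Complex.ofReal_re]
  rw [hval] at hB
  exact Filter.Tendsto.congr' (Filter.EventuallyEq.symm hA) hB
end
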